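/- arXiv:1407.2472 — 5 statements merged into one kernel-verified Lean document; each statement's English description precedes it below -/
import Mathlib

section
/- Every σ-finite measure space (Ω,Σ,μ) with μ(Ω) = ∞ admits an admissible covering: there exist atomic σ-subalgebras Σ_a, Σ_b of Σ forming an admissible covering of (Ω,Σ,μ). -/
open MeasureTheory ENNReal

/-- An atomic σ-subalgebra of the ambient σ-algebra, encoded by the countable
measurable partition of `Ω` into atoms of positive finite measure generating it. -/
structure AtomicPartition {Ω : Type*} {m : MeasurableSpace Ω} (μ : Measure Ω) where
  ι : Type
  countable : Countable ι
  atom : ι → Set Ω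
  measurableSet : ∀ i, MeasurableSet (atom i)
  disjoint : Pairwise (Function.onFun Disjoint atom)
  cover : ⋃ i, atom i = Set.univ
  pos : ∀ i, 0 < μ (atom i)
  lt_top : ∀ i, μ (atom i) < ∞

namespace AtomicPartition

variable {Ω : Type*} {m : MeasurableSpace Ω} {μ : Measure Ω}

/-- The σ-algebra generated by the atoms. -/
def sigma (P : AtomicPartition μ) : MeasurableSpace Ω :=
  MeasurableSpace.generateFrom (Set.range P.atom)

/-- The conditional expectation onto the atomic σ-algebra:
`E f = ∑_A (μ(A)⁻¹ ∫_A f dμ) · 1_A`. -/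
noncomputable def condExp (P : AtomicPartition μ) {E : Type*} [NormedAddCommGroup E]
    [NormedSpace ℝ E] (f : Ω → E) : Ω → E := fun x =>
  ∑' i, Set.indicator (P.atom i)
    (fun _ => (μ (P.atom i)).toReal⁻¹ • ∫ y in P.atom i, f y ∂μ) x

end AtomicPartition

/-- `|R_B|`: the number (in `ℝ≥0∞`) of atoms of `Pa` meeting the atom `Pb.atom j`
in positive measure. -/
noncomputable def rCard {Ω : Type*} {m : MeasurableSpace Ω} (μ : Measure Ω)
    (Pa Pb : AtomicPartition μ) (j : Pb.ι) : ℝ≥0∞ :=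
  ∑' _i : {i : Pa.ι // 0 < μ (Pa.atom i ∩ Pb.atom j)}, 1

/-- `∑_{B ∈ R_A} |R_B| · μ(A∩B)² / (μ(A)μ(B))` for the atom `A = Pa.atom i`
(terms with `μ(A∩B) = 0` vanish, so we may sum over all atoms of `Pb`). -/
noncomputable def atomSum {Ω : Type*} {m : MeasurableSpace Ω} (μ : Measure Ω)
    (Pa Pb : AtomicPartition μ) (i : Pa.ι) : ℝ≥0∞ :=
  ∑' j : Pb.ι, rCard μ Pa Pb j * μ (Pa.atom i ∩ Pb.atom j) ^ 2 /
    (μ (Pa.atom i) * μ (Pb.atom j))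

/-- `Σ_a ∩ Σ_b = {Ω, ∅}` modulo `μ`-null sets. -/
def TrivialIntersection {Ω : Type*} {m : MeasurableSpace Ω} (μ : Measure Ω)
    (ma mb : MeasurableSpace Ω) : Prop :=
  ∀ S T : Set Ω, MeasurableSet[ma] S → MeasurableSet[mb] T →
    μ (symmDiff S T) = 0 → μ S = 0 ∨ μ Sᶜ = 0

/-- `(Σ_a, Σ_b)` is an admissible covering of `(Ω, Σ, μ)` with distinguished atoms
`A0, B0` (which are actual atoms when `μ` is finite, and `∅`, i.e. `none`, when
`μ(Ω) = ∞`). -/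
structure IsAdmissibleCovering {Ω : Type*} {m : MeasurableSpace Ω} (μ : Measure Ω)
    (Pa Pb : AtomicPartition μ) (A0 : Option Pa.ι) (B0 : Option Pb.ι) : Prop where
  trivial_inter : TrivialIntersection μ Pa.sigma Pb.sigma
  infinite_case : μ Set.univ = ∞ → A0 = none ∧ B0 = none
  finite_case : μ Set.univ < ∞ → A0.isSome ∧ B0.isSome
  small : min (⨆ i ∈ {i : Pa.ι | some i ≠ A0}, atomSum μ Pa Pb i)
      (⨆ j ∈ {j : Pb.ι | some j ≠ B0}, atomSum μ Pb Pa j) < 1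



lemma aux_tail_step (f : ℕ → ℝ≥0∞) (hf : ∀ n, f n < ∞) (h : ∑' n, f n = ∞) (N : ℕ)
    (M : ℝ≥0∞) (hM : M < ∞) : ∃ K, N < K ∧ M ≤ ∑ j ∈ Finset.Ico N K, f j := by
  have hN : ∑ j ∈ Finset.range N, f j < ∞ :=
    ENNReal.sum_lt_top.2 fun j _ => hf j
  have hlt : M + ∑ j ∈ Finset.range N, f j < ∑' n, f n := by
    rw [h]; exact ENNReal.add_lt_top.2 ⟨hM, hN⟩
  rw [ENNReal.tsum_eq_iSup_sum, lt_iSup_iff] at hlt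
  obtain ⟨s, hs⟩ := hlt
  refine ⟨N + (s.sup id) + 1, by omega, ?_⟩
  have hsub : s ⊆ Finset.range (N + s.sup id + 1) := by
    intro x hx
    have : x ≤ s.sup id := Finset.le_sup (f := id) hx
    simp only [Finset.mem_range]; omega
  have h2 : ∑ j ∈ s, f j ≤ ∑ j ∈ Finset.range (N + s.sup id + 1), f j :=
    Finset.sum_le_sum_of_subset hsub
  have h3 : ∑ j ∈ Finset.range (N + s.sup id + 1), f j
      = ∑ j ∈ Finset.range N, f j + ∑ j ∈ Finset.Ico N (N + s.sup id + 1), f j := by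
    rw [Finset.range_eq_Ico, ← Finset.sum_Ico_consecutive f (by omega : 0 ≤ N) (by omega : N ≤ N + s.sup id + 1)]
    rw [Finset.range_eq_Ico]
  have h4 : M + ∑ j ∈ Finset.range N, f j
      < ∑ j ∈ Finset.range N, f j + ∑ j ∈ Finset.Ico N (N + s.sup id + 1), f j :=
    lt_of_lt_of_le (lt_of_lt_of_le hs h2) h3.le
  rw [add_comm M] at h4
  exact (ENNReal.add_lt_add_iff_left hN.ne).1 h4 |>.le

lemma aux_exists_blocks (f : ℕ → ℝ≥0∞) (hf : ∀ n, f n < ∞) (h : ∑' n, f n = ∞) :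
    ∃ g : ℕ → ℕ, g 0 = 0 ∧ StrictMono g ∧
      ∀ n, (0 < ∑ j ∈ Finset.Ico (g n) (g (n+1)), f j) ∧
        ((∑ j ∈ Finset.Ico (g n) (g (n+1)), f j) < ∞) ∧
        8 * ∑ j ∈ Finset.Ico (g n) (g (n+1)), f j
          ≤ ∑ j ∈ Finset.Ico (g (n+1)) (g (n+2)), f j := by
  classical
  set S : ℕ × ℕ → ℝ≥0∞ := fun p => ∑ j ∈ Finset.Ico p.1 p.2, f j with hSdef
  have hSfin : ∀ p, S p < ∞ := fun p => ENNReal.sum_lt_top.2 fun j _ => hf j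
  have hM : ∀ p : ℕ × ℕ, max 1 (8 * S p) < ∞ := fun p =>
    max_lt one_lt_top (ENNReal.mul_lt_top (by norm_num) (hSfin p))
  have step : ∀ p : ℕ × ℕ, ∃ K, p.2 < K ∧
      max 1 (8 * S p) ≤ ∑ j ∈ Finset.Ico p.2 K, f j :=
    fun p => aux_tail_step f hf h p.2 _ (hM p)
  choose K hK1 hK2 using step
  obtain ⟨K0, hK01, hK02⟩ := aux_tail_step f hf h 0 1 one_lt_top
  set hseq : ℕ → ℕ × ℕ := fun n => Nat.rec ((0 : ℕ), K0) (fun _ p => (p.2, K p)) n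
    with hhdef
  set g : ℕ → ℕ := fun n => (hseq n).1 with hgdef
  have hlt : ∀ n, (hseq n).1 < (hseq n).2 := by
    intro n
    induction n with
    | zero => exact hK01
    | succ n ih => exact hK1 (hseq n)
  have hSn : ∀ n, ∑ j ∈ Finset.Ico (g n) (g (n+1)), f j = S (hseq n) := fun n => rfl
  have hc1 : ∀ n, 1 ≤ S (hseq n) := by
    intro n
    cases n with
    | zero => exact hK02
    | succ n => exact le_trans (le_max_left _ _) (hK2 (hseq n))
  have hc8 : ∀ n, 8 * S (hseq n) ≤ S (hseq (n+1)) :=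
    fun n => le_trans (le_max_right _ _) (hK2 (hseq n))
  refine ⟨g, rfl, strictMono_nat_of_lt_succ (fun n => hlt n), fun n => ⟨?_, ?_, ?_⟩⟩
  · rw [hSn]; exact lt_of_lt_of_le zero_lt_one (hc1 n)
  · rw [hSn]; exact hSfin _
  · rw [hSn n, hSn (n+1)]; exact hc8 n

lemma aux_exists_base {Ω : Type*} [MeasurableSpace Ω] (μ : Measure Ω) [SigmaFinite μ]
    (hμ : μ Set.univ = ∞) :
    ∃ C : ℕ → Set Ω, (∀ n, MeasurableSet (C n)) ∧
      Pairwise (Function.onFun Disjoint C) ∧ (⋃ n, C n) = Set.univ ∧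
      (∀ n, 0 < μ (C n)) ∧ (∀ n, μ (C n) < ∞) ∧
      (∀ n, 8 * μ (C n) ≤ μ (C (n+1))) := by
  classical
  set D : ℕ → Set Ω := disjointed (spanningSets μ) with hD
  have hDm : ∀ n, MeasurableSet (D n) :=
    MeasurableSet.disjointed fun n => measurableSet_spanningSets μ n
  have hDd : Pairwise (Function.onFun Disjoint D) := disjoint_disjointed _
  have hDu : (⋃ n, D n) = Set.univ := by
    rw [hD, iUnion_disjointed, iUnion_spanningSets]
  have hDfin : ∀ n, μ (D n) < ∞ := fun n =>
    lt_of_le_of_lt (measure_mono (disjointed_subset _ n)) (measure_spanningSets_lt_top μ n)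
  have htsum : ∑' n, μ (D n) = ∞ := by
    rw [← measure_iUnion hDd hDm, hDu, hμ]
  obtain ⟨g, hg0, hgm, hgP⟩ := aux_exists_blocks (fun n => μ (D n)) hDfin htsum
  set C : ℕ → Set Ω := fun n => ⋃ j ∈ Finset.Ico (g n) (g (n+1)), D j with hC
  have hmeas : ∀ n, μ (C n) = ∑ j ∈ Finset.Ico (g n) (g (n+1)), μ (D j) := by
    intro n
    exact measure_biUnion_finset (fun a _ b _ hab => hDd hab) (fun b _ => hDm b)
  have hIco : ∀ {n m : ℕ}, n ≠ m → ∀ {j k : ℕ}, j ∈ Finset.Ico (g n) (g (n+1)) →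
      k ∈ Finset.Ico (g m) (g (m+1)) → j ≠ k := by
    intro n m hnm j k hj hk
    simp only [Finset.mem_Ico] at hj hk
    rcases lt_or_gt_of_ne hnm with h | h
    · have : g (n+1) ≤ g m := hgm.monotone (by omega)
      omega
    · have : g (m+1) ≤ g n := hgm.monotone (by omega)
      omega
  refine ⟨C, fun n => (Finset.Ico (g n) (g (n+1))).measurableSet_biUnion
      (fun b _ => hDm b), ?_, ?_, ?_, ?_, ?_⟩
  · intro n m hnm
    rw [Function.onFun, Set.disjoint_left]
    rintro x hx hx'
    simp only [hC, Set.mem_iUnion, exists_prop] at hx hx'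
    obtain ⟨j, hj, hxj⟩ := hx
    obtain ⟨k, hk, hxk⟩ := hx'
    exact (hDd (hIco hnm hj hk)).le_bot ⟨hxj, hxk⟩
  · rw [← hDu]
    apply Set.Subset.antisymm
    · exact Set.iUnion_subset fun n => Set.iUnion₂_subset fun j _ => Set.subset_iUnion D j
    apply Set.iUnion_subset
    intro j x hx
    have hex : ∃ n, g n ≤ j ∧ j < g (n+1) := by
      set n := Nat.findGreatest (fun m => g m ≤ j) (j+1) with hn
      have h0 : g 0 ≤ j := by rw [hg0]; exact Nat.zero_le j
      have hspec : g n ≤ j :=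
        Nat.findGreatest_spec (P := fun m => g m ≤ j) (m := 0) (by omega) h0
      refine ⟨n, hspec, ?_⟩
      by_contra hcon
      push_neg at hcon
      have hle : n + 1 ≤ j + 1 := by
        have := hgm.le_apply (x := n+1)
        omega
      exact absurd (Nat.le_findGreatest (P := fun m => g m ≤ j) hle hcon) (by omega)
    obtain ⟨n, h1, h2⟩ := hex
    exact Set.mem_iUnion.2 ⟨n, Set.mem_biUnion (Finset.mem_Ico.2 ⟨h1, h2⟩) hx⟩
  · intro n; rw [hmeas]; exact (hgP n).1
  · intro n; rw [hmeas]; exact (hgP n).2.1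
  · intro n; rw [hmeas, hmeas]; exact (hgP n).2.2

lemma aux_measurableSet_partition {Ω ι : Type*} (atom : ι → Set Ω)
    (hdisj : Pairwise (Function.onFun Disjoint atom)) (hcover : ⋃ i, atom i = Set.univ)
    {S : Set Ω} (hS : MeasurableSet[MeasurableSpace.generateFrom (Set.range atom)] S) :
    ∃ t : Set ι, S = ⋃ i ∈ t, atom i := by
  let M : MeasurableSpace Ω :=
    { MeasurableSet' := fun S => ∃ t : Set ι, S = ⋃ i ∈ t, atom i
      measurableSet_empty := ⟨∅, by simp⟩
      measurableSet_compl := by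
        rintro _ ⟨t, rfl⟩
        refine ⟨tᶜ, ?_⟩
        ext x
        obtain ⟨i0, hi0⟩ : ∃ i, x ∈ atom i := by
          have : x ∈ ⋃ i, atom i := hcover ▸ Set.mem_univ x
          exact Set.mem_iUnion.1 this
        have key : ∀ i, x ∈ atom i → i = i0 := by
          intro i hi
          by_contra hne
          exact (hdisj hne).le_bot ⟨hi, hi0⟩ |>.elim
        simp only [Set.mem_compl_iff, Set.mem_iUnion, exists_prop, not_exists, not_and]
        constructor
        · intro h
          exact ⟨i0, fun hmem => h i0 hmem hi0, hi0⟩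
        · rintro ⟨i, hit, hxi⟩ j hjt hxj
          exact hit (by rwa [(key i hxi).trans (key j hxj).symm])
      measurableSet_iUnion := by
        intro f hf
        choose t ht using hf
        refine ⟨⋃ n, t n, ?_⟩
        simp only [ht, Set.mem_iUnion]
        ext x
        simp only [Set.mem_iUnion, exists_prop]
        tauto }
  have hle : MeasurableSpace.generateFrom (Set.range atom) ≤ M := by
    apply MeasurableSpace.generateFrom_le
    rintro _ ⟨i, rfl⟩
    exact ⟨{i}, by simp⟩
  exact hle _ hS

lemma aux_mem_of_pos {Ω : Type*} [MeasurableSpace Ω] (μ : Measure Ω) (B : ℕ → Set Ω)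
    (hd : Pairwise (Function.onFun Disjoint B)) (t : Set ℕ) (j0 : ℕ) (X : Set Ω)
    (hX : X ⊆ B j0) (hpos : 0 < μ X) (hz : μ (X \ ⋃ j ∈ t, B j) = 0) : j0 ∈ t := by
  by_contra hj0
  have hXT : X ∩ (⋃ j ∈ t, B j) = ∅ := by
    ext x
    simp only [Set.mem_inter_iff, Set.mem_iUnion, exists_prop, Set.mem_empty_iff_false,
      iff_false, not_and, not_exists]
    rintro hxX j hjt hxj
    have : j = j0 := by
      by_contra hne
      exact (hd hne).le_bot ⟨hxj, hX hxX⟩ |>.elim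
    exact hj0 (this ▸ hjt)
  have : μ X ≤ μ (X ∩ (⋃ j ∈ t, B j)) + μ (X \ ⋃ j ∈ t, B j) :=
    measure_le_inter_add_diff μ X _
  rw [hXT, hz, measure_empty, add_zero] at this
  exact absurd (le_antisymm this zero_le) (ne_of_gt hpos)

lemma aux_tsum_one_le_two {S : Set ℕ} {a b : ℕ} (h : S ⊆ {a, b}) :
    ∑' _ : S, (1 : ℝ≥0∞) ≤ 2 := by
  classical
  calc ∑' _ : S, (1 : ℝ≥0∞) = ∑' x : ℕ, S.indicator (fun _ => 1) x :=
        tsum_subtype S (fun _ => 1)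
    _ = ∑ x ∈ ({a, b} : Finset ℕ), S.indicator (fun _ => (1 : ℝ≥0∞)) x := by
        refine tsum_eq_sum fun x hx => Set.indicator_of_notMem (fun hxS => hx ?_) _
        have := h hxS
        simp only [Set.mem_insert_iff, Set.mem_singleton_iff] at this
        simp [this]
    _ ≤ ∑ x ∈ ({a, b} : Finset ℕ), 1 := by
        refine Finset.sum_le_sum fun x _ => ?_
        by_cases hx : x ∈ S <;> simp [Set.indicator, hx]
    _ ≤ 2 := by
        rw [Finset.sum_const, nsmul_eq_mul, mul_one]
        have : ({a, b} : Finset ℕ).card ≤ 2 :=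
          le_trans (Finset.card_insert_le _ _) (by simp)
        exact_mod_cast this

lemma aux_term_le (r x d : ℝ≥0∞) (hr : r ≤ 2) (hx0 : 0 < x) (hxt : x ≠ ∞)
    (hd : 8 * x ^ 2 ≤ d) : r * x ^ 2 / d ≤ 1 / 4 := by
  have hne : 2 * x ^ 2 ≠ 0 := by
    simp [pow_eq_zero_iff, hx0.ne']
  have hfin : 2 * x ^ 2 ≠ ∞ := by
    simp [ENNReal.mul_ne_top, ENNReal.pow_ne_top hxt]
  calc r * x ^ 2 / d ≤ (2 * x ^ 2) / (8 * x ^ 2) :=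
        ENNReal.div_le_div (mul_le_mul_left hr _) hd
    _ = (2 * x ^ 2 * 1) / ((2 * x ^ 2) * 4) := by ring_nf
    _ = 1 / 4 := ENNReal.mul_div_mul_left 1 4 hne hfin

lemma aux_quarter_add : (1/4 + 1/4 : ℝ≥0∞) = 1/2 := by
  rw [ENNReal.div_add_div_same]
  calc ((1:ℝ≥0∞)+1)/4 = (2*1)/(2*2) := by norm_num
    _ = 1/2 := ENNReal.mul_div_mul_left 1 2 two_ne_zero ENNReal.ofNat_ne_top

def SAf (n : ℕ) : Finset ℕ := {2 * n, 2 * n + 1}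

def SBf : ℕ → Finset ℕ
  | 0 => {0}
  | m + 1 => {2 * m + 1, 2 * m + 2}

lemma mem_SAf {k n : ℕ} : k ∈ SAf n ↔ k / 2 = n := by
  simp only [SAf, Finset.mem_insert, Finset.mem_singleton]
  omega

lemma mem_SBf {k n : ℕ} : k ∈ SBf n ↔ (k + 1) / 2 = n := by
  cases n with
  | zero => simp only [SBf, Finset.mem_singleton]; omega
  | succ m => simp only [SBf, Finset.mem_insert, Finset.mem_singleton]; omega

lemma SAf_disj {n m : ℕ} (h : n ≠ m) : SAf n ∩ SAf m = ∅ := by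
  ext k; simp only [Finset.mem_inter, mem_SAf, Finset.notMem_empty, iff_false, not_and]
  omega

lemma SBf_disj {n m : ℕ} (h : n ≠ m) : SBf n ∩ SBf m = ∅ := by
  ext k; simp only [Finset.mem_inter, mem_SBf, Finset.notMem_empty, iff_false, not_and]
  omega

lemma SAf_inter_SBf_self (n : ℕ) : SAf n ∩ SBf n = {2 * n} := by
  ext k
  simp only [Finset.mem_inter, mem_SAf, mem_SBf, Finset.mem_singleton]
  omega

lemma SAf_inter_SBf_succ (n : ℕ) : SAf n ∩ SBf (n + 1) = {2 * n + 1} := by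
  ext k
  simp only [Finset.mem_inter, mem_SAf, mem_SBf, Finset.mem_singleton]
  omega

lemma SAf_inter_SBf_empty {n j : ℕ} (h1 : j ≠ n) (h2 : j ≠ n + 1) :
    SAf n ∩ SBf j = ∅ := by
  ext k
  simp only [Finset.mem_inter, mem_SAf, mem_SBf, Finset.notMem_empty, iff_false, not_and]
  omega

lemma aux_biUnion_inter_biUnion {Ω : Type*} (C : ℕ → Set Ω)
    (hCd : Pairwise (Function.onFun Disjoint C)) (s t : Finset ℕ) :
    (⋃ j ∈ s, C j) ∩ (⋃ j ∈ t, C j) = ⋃ j ∈ (s ∩ t), C j := by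
  ext x
  simp only [Set.mem_inter_iff, Set.mem_iUnion, exists_prop, Finset.mem_inter]
  constructor
  · rintro ⟨⟨j, hj, hxj⟩, ⟨k, hk, hxk⟩⟩
    have : j = k := by
      by_contra hne
      exact (hCd hne).le_bot ⟨hxj, hxk⟩ |>.elim
    exact ⟨j, ⟨hj, this ▸ hk⟩, hxj⟩
  · rintro ⟨j, ⟨hj, hk⟩, hxj⟩
    exact ⟨⟨j, hj, hxj⟩, ⟨j, hk, hxj⟩⟩

/-- Lemma 1.3 i.  Every σ-finite measure space with `μ(Ω) = ∞`
admits an admissible covering. -/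
theorem statement1 {Ω : Type*} [MeasurableSpace Ω] (μ : Measure Ω) [SigmaFinite μ]
    (hμ : μ Set.univ = ∞) :
    ∃ Pa Pb : AtomicPartition μ, IsAdmissibleCovering μ Pa Pb none none := by
  classical
  obtain ⟨C, hCm, hCd, hCu, hCpos, hCfin, hC8⟩ := aux_exists_base μ hμ
  set AA : ℕ → Set Ω := fun n => ⋃ j ∈ SAf n, C j with hAAdef
  set BB : ℕ → Set Ω := fun n => ⋃ j ∈ SBf n, C j with hBBdef
  -- basic subset facts
  have h2nA : ∀ n, C (2*n) ⊆ AA n := fun n =>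
    Set.subset_biUnion_of_mem (mem_SAf.2 (by omega))
  have h2n1A : ∀ n, C (2*n+1) ⊆ AA n := fun n =>
    Set.subset_biUnion_of_mem (mem_SAf.2 (by omega))
  have h2nB : ∀ n, C (2*n) ⊆ BB n := fun n =>
    Set.subset_biUnion_of_mem (mem_SBf.2 (by omega))
  have h2n1B : ∀ n, C (2*n+1) ⊆ BB (n+1) := fun n =>
    Set.subset_biUnion_of_mem (mem_SBf.2 (by omega))
  have h2n2B : ∀ n, C (2*n+2) ⊆ BB (n+1) := fun n =>
    Set.subset_biUnion_of_mem (mem_SBf.2 (by omega))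
  have h2n2A : ∀ n, C (2*n+2) ⊆ AA (n+1) := fun n =>
    Set.subset_biUnion_of_mem (mem_SAf.2 (by omega))
  -- intersections
  have hABself : ∀ n, AA n ∩ BB n = C (2*n) := by
    intro n
    rw [hAAdef, hBBdef]
    rw [aux_biUnion_inter_biUnion C hCd, SAf_inter_SBf_self]
    simp
  have hABsucc : ∀ n, AA n ∩ BB (n+1) = C (2*n+1) := by
    intro n
    rw [hAAdef, hBBdef]
    rw [aux_biUnion_inter_biUnion C hCd, SAf_inter_SBf_succ]
    simp
  have hABempty : ∀ n j, j ≠ n → j ≠ n+1 → AA n ∩ BB j = ∅ := by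
    intro n j h1 h2
    rw [hAAdef, hBBdef]
    rw [aux_biUnion_inter_biUnion C hCd, SAf_inter_SBf_empty h1 h2]
    simp
  -- partition facts for AA
  have hAm : ∀ n, MeasurableSet (AA n) := fun n =>
    (SAf n).measurableSet_biUnion (fun b _ => hCm b)
  have hAd : Pairwise (Function.onFun Disjoint AA) := by
    intro n m hnm
    rw [Function.onFun, Set.disjoint_iff_inter_eq_empty]
    rw [hAAdef, aux_biUnion_inter_biUnion C hCd, SAf_disj hnm]
    simp
  have hAu : (⋃ n, AA n) = Set.univ := by
    apply Set.Subset.antisymm (Set.subset_univ _)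
    rw [← hCu]
    refine Set.iUnion_subset fun k => ?_
    exact subset_trans (Set.subset_biUnion_of_mem (mem_SAf.2 rfl))
      (Set.subset_iUnion AA (k / 2))
  have hApos : ∀ n, 0 < μ (AA n) := fun n =>
    lt_of_lt_of_le (hCpos (2*n)) (measure_mono (h2nA n))
  have hAfin : ∀ n, μ (AA n) < ∞ := by
    intro n
    refine lt_of_le_of_lt (measure_biUnion_finset_le _ _) ?_
    exact ENNReal.sum_lt_top.2 fun j _ => hCfin j
  -- partition facts for BB
  have hBm : ∀ n, MeasurableSet (BB n) := fun n =>
    (SBf n).measurableSet_biUnion (fun b _ => hCm b)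
  have hBd : Pairwise (Function.onFun Disjoint BB) := by
    intro n m hnm
    rw [Function.onFun, Set.disjoint_iff_inter_eq_empty]
    rw [hBBdef, aux_biUnion_inter_biUnion C hCd, SBf_disj hnm]
    simp
  have hBu : (⋃ n, BB n) = Set.univ := by
    apply Set.Subset.antisymm (Set.subset_univ _)
    rw [← hCu]
    refine Set.iUnion_subset fun k => ?_
    exact subset_trans (Set.subset_biUnion_of_mem (mem_SBf.2 rfl))
      (Set.subset_iUnion BB ((k+1) / 2))
  have hBpos : ∀ n, 0 < μ (BB n) := fun n =>
    lt_of_lt_of_le (hCpos (2*n)) (measure_mono (h2nB n))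
  have hBfin : ∀ n, μ (BB n) < ∞ := by
    intro n
    refine lt_of_le_of_lt (measure_biUnion_finset_le _ _) ?_
    exact ENNReal.sum_lt_top.2 fun j _ => hCfin j
  set Pa : AtomicPartition μ :=
    { ι := ℕ, countable := inferInstance, atom := AA, measurableSet := hAm,
      disjoint := hAd, cover := hAu, pos := hApos, lt_top := hAfin } with hPa
  set Pb : AtomicPartition μ :=
    { ι := ℕ, countable := inferInstance, atom := BB, measurableSet := hBm,
      disjoint := hBd, cover := hBu, pos := hBpos, lt_top := hBfin } with hPb
  refine ⟨Pa, Pb, ?_, fun _ => ⟨rfl, rfl⟩, fun h => absurd hμ h.ne, ?_⟩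
  · -- trivial intersection
    intro S T hS hT hsymm
    obtain ⟨s, rfl⟩ := aux_measurableSet_partition AA hAd hAu hS
    obtain ⟨t, rfl⟩ := aux_measurableSet_partition BB hBd hBu hT
    have hST : μ ((⋃ i ∈ s, AA i) \ (⋃ j ∈ t, BB j)) = 0 :=
      measure_mono_null (by rw [Set.symmDiff_def]; exact Set.subset_union_left) hsymm
    have hTS : μ ((⋃ j ∈ t, BB j) \ (⋃ i ∈ s, AA i)) = 0 :=
      measure_mono_null (by rw [Set.symmDiff_def]; exact Set.subset_union_right) hsymm
    have f1 : ∀ i, i ∈ s → (i+1) ∈ t := by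
      intro i hi
      refine aux_mem_of_pos μ BB hBd t (i+1) (C (2*i+1)) (h2n1B i) (hCpos _) ?_
      refine measure_mono_null ?_ hST
      exact Set.diff_subset_diff_left
        (subset_trans (h2n1A i) (Set.subset_biUnion_of_mem hi))
    have f4 : ∀ i, (i+1) ∈ s → (i+1) ∈ t := by
      intro i hi
      refine aux_mem_of_pos μ BB hBd t (i+1) (C (2*i+2)) (h2n2B i) (hCpos _) ?_
      refine measure_mono_null ?_ hST
      exact Set.diff_subset_diff_left
        (subset_trans (h2n2A i) (Set.subset_biUnion_of_mem hi))
    have f2 : ∀ i, (i+1) ∈ t → i ∈ s := by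
      intro i hi
      refine aux_mem_of_pos μ AA hAd s i (C (2*i+1)) (h2n1A i) (hCpos _) ?_
      refine measure_mono_null ?_ hTS
      exact Set.diff_subset_diff_left
        (subset_trans (h2n1B i) (Set.subset_biUnion_of_mem hi))
    have f3 : ∀ i, (i+1) ∈ t → (i+1) ∈ s := by
      intro i hi
      refine aux_mem_of_pos μ AA hAd s (i+1) (C (2*i+2)) (h2n2A i) (hCpos _) ?_
      refine measure_mono_null ?_ hTS
      exact Set.diff_subset_diff_left
        (subset_trans (h2n2B i) (Set.subset_biUnion_of_mem hi))
    by_cases hs : s = ∅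
    · left
      subst hs
      simp
    · right
      obtain ⟨m, hm⟩ := Set.nonempty_iff_ne_empty.2 hs
      have hup : ∀ k, k ∈ s → (k+1) ∈ s := fun k hk => f3 k (f1 k hk)
      have hdown : ∀ k, (k+1) ∈ s → k ∈ s := fun k hk => f2 k (f4 k hk)
      have hall : ∀ n, n ∈ s := by
        have h1 : ∀ k, m + k ∈ s := by
          intro k
          induction k with
          | zero => simpa using hm
          | succ k ih => exact hup _ ih
        have h2 : ∀ k, k ≤ m → m - k ∈ s := by
          intro k
          induction k with
          | zero => intro _; simpa using hm
          | succ k ih =>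
            intro hk
            have hkm := ih (by omega)
            have heq : m - k = (m - (k+1)) + 1 := by omega
            rw [heq] at hkm
            exact hdown _ hkm
        intro n
        rcases le_or_gt m n with h | h
        · have : n = m + (n - m) := by omega
          rw [this]; exact h1 _
        · have : n = m - (m - n) := by omega
          rw [this]; exact h2 _ (by omega)
      have huniv : ⋃ i ∈ s, AA i = Set.univ := by
        apply Set.Subset.antisymm (Set.subset_univ _)
        rw [← hAu]
        exact Set.iUnion_subset fun i => Set.subset_biUnion_of_mem (hall i)
      rw [huniv, Set.compl_univ, measure_empty]
  · -- smallness
    have hPaAtom : Pa.atom = AA := rfl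
    have hPbAtom : Pb.atom = BB := rfl
    have hrC : ∀ j, rCard μ Pa Pb j ≤ 2 := by
      intro j
      have heq : rCard μ Pa Pb j
          = ∑' _ : {i : ℕ | 0 < μ (AA i ∩ BB j)}, (1 : ℝ≥0∞) := rfl
      rw [heq]
      refine aux_tsum_one_le_two (a := j - 1) (b := j) ?_
      intro i hi
      simp only [Set.mem_setOf_eq] at hi
      simp only [Set.mem_insert_iff, Set.mem_singleton_iff]
      by_contra hcon
      push_neg at hcon
      rw [hABempty i j (by omega) (by omega), measure_empty] at hi
      exact lt_irrefl 0 hi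
    have hsupA : (⨆ i ∈ {i : ℕ | some i ≠ (none : Option ℕ)}, atomSum μ Pa Pb i)
        ≤ 1/2 := by
      have hset : {i : ℕ | some i ≠ (none : Option ℕ)} = Set.univ := by
        ext i; simp
      rw [hset]
      simp only [Set.mem_univ, iSup_pos, iSup_univ]
      refine iSup_le fun i => ?_
      have hvan : ∀ j ∉ ({i, i+1} : Finset ℕ),
          rCard μ Pa Pb j * μ (Pa.atom i ∩ Pb.atom j) ^ 2
            / (μ (Pa.atom i) * μ (Pb.atom j)) = 0 := by
        intro j hj
        simp only [Finset.mem_insert, Finset.mem_singleton] at hj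
        push_neg at hj
        rw [hPaAtom, hPbAtom, hABempty i j hj.1 hj.2, measure_empty]
        simp
      have expand : atomSum μ Pa Pb i
          = rCard μ Pa Pb i * μ (Pa.atom i ∩ Pb.atom i) ^ 2
              / (μ (Pa.atom i) * μ (Pb.atom i))
            + rCard μ Pa Pb (i+1) * μ (Pa.atom i ∩ Pb.atom (i+1)) ^ 2
              / (μ (Pa.atom i) * μ (Pb.atom (i+1))) := by
        rw [atomSum, tsum_eq_sum hvan, Finset.sum_pair (by omega : i ≠ i + 1)]
      rw [expand, hPaAtom, hPbAtom]
      have t1 : rCard μ Pa Pb i * μ (AA i ∩ BB i) ^ 2 / (μ (AA i) * μ (BB i))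
          ≤ 1/4 := by
        rw [hABself i]
        refine aux_term_le _ _ _ (hrC i) (hCpos _) (hCfin _).ne ?_
        have ha : 8 * μ (C (2*i)) ≤ μ (AA i) :=
          le_trans (hC8 (2*i)) (measure_mono (h2n1A i))
        have hb : μ (C (2*i)) ≤ μ (BB i) := measure_mono (h2nB i)
        calc 8 * μ (C (2*i)) ^ 2 = (8 * μ (C (2*i))) * μ (C (2*i)) := by ring
          _ ≤ μ (AA i) * μ (BB i) := mul_le_mul' ha hb
      have t2 : rCard μ Pa Pb (i+1) * μ (AA i ∩ BB (i+1)) ^ 2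
          / (μ (AA i) * μ (BB (i+1))) ≤ 1/4 := by
        rw [hABsucc i]
        refine aux_term_le _ _ _ (hrC (i+1)) (hCpos _) (hCfin _).ne ?_
        have ha : μ (C (2*i+1)) ≤ μ (AA i) := measure_mono (h2n1A i)
        have hb : 8 * μ (C (2*i+1)) ≤ μ (BB (i+1)) :=
          le_trans (hC8 (2*i+1)) (measure_mono (h2n2B i))
        calc 8 * μ (C (2*i+1)) ^ 2 = μ (C (2*i+1)) * (8 * μ (C (2*i+1))) := by ring
          _ ≤ μ (AA i) * μ (BB (i+1)) := mul_le_mul' ha hb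
      calc _ ≤ (1/4 : ℝ≥0∞) + 1/4 := add_le_add t1 t2
        _ = 1/2 := aux_quarter_add
    refine lt_of_le_of_lt (min_le_left _ _) (lt_of_le_of_lt hsupA ?_)
    exact ENNReal.half_lt_self one_ne_zero ENNReal.one_ne_top
end

section
/- Let (Ω,Σ,μ) be a probability space, let Σ_a, Σ_b be sub-σ-algebras of Σ with conditional expectations E_a, E_b, let 1 ≤ p < ∞ and 0 < c < 1. Assume that for every f ∈ L_p(μ) with ∫_Ω f dμ = 0 one has min{‖E_aE_bf‖_{L_p(μ)}, ‖E_bE_af‖_{L_p(μ)}} ≤ c‖f‖_{L_p(μ)}. Then every φ ∈ L_p(μ) satisfies ‖φ − ∫_Ω φ dμ‖_{L_p(μ)} ≤ (1/(1−c))·(‖φ − E_aφ‖_{L_p(μ)} + ‖φ − E_bφ‖_{L_p(μ)}). -/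
open MeasureTheory ENNReal

namespace Statement3Aux

variable {Ω : Type*} {m m0 : MeasurableSpace Ω} {μ : Measure Ω}

/-- Conditional expectation commutes with the real-linear map `z ↦ (θ * z).re`. -/
lemma condexp_re_mul (hm : m ≤ m0) [SigmaFinite (μ.trim hm)] (θ : ℂ) {f : Ω → ℂ}
    (hf : Integrable f μ) :
    (fun x => (θ * (μ[f|m]) x).re) =ᵐ[μ] μ[fun x => (θ * f x).re|m] := by
  set T : ℂ →L[ℝ] ℝ := Complex.reCLM.comp ((ContinuousLinearMap.mul ℝ ℂ) θ) with hT
  have hTapp : ∀ z : ℂ, T z = (θ * z).re := fun z => rfl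
  refine ae_eq_condExp_of_forall_setIntegral_eq hm (T.integrable_comp hf) ?_ ?_ ?_
  · exact fun s _ _ => (T.integrable_comp integrable_condExp).integrableOn
  · intro s hs hμs
    have h1 : ∫ x in s, T ((μ[f|m]) x) ∂μ = T (∫ x in s, (μ[f|m]) x ∂μ) :=
      T.integral_comp_comm integrable_condExp.integrableOn
    have h2 : ∫ x in s, T (f x) ∂μ = T (∫ x in s, f x ∂μ) :=
      T.integral_comp_comm hf.integrableOn
    simp only [← hTapp]
    rw [h1, h2, setIntegral_condExp hm hf hs]
  · exact ((T.continuous.comp_stronglyMeasurable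
      stronglyMeasurable_condExp)).aestronglyMeasurable

/-- a.e. pointwise bound `‖E[f|m]‖ ≤ E[‖f‖|m]` for complex valued `f`. -/
lemma norm_condexp_le (hm : m ≤ m0) [SigmaFinite (μ.trim hm)] {f : Ω → ℂ}
    (hf : Integrable f μ) :
    ∀ᵐ x ∂μ, ‖(μ[f|m]) x‖ ≤ (μ[fun x => ‖f x‖|m]) x := by
  have key : ∀ q : ℚ, ∀ᵐ x ∂μ,
      (Complex.exp (q * Complex.I) * (μ[f|m]) x).re ≤ (μ[fun x => ‖f x‖|m]) x := by
    intro q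
    set θ : ℂ := Complex.exp (q * Complex.I) with hθ
    have hθ1 : ‖θ‖ = 1 := Complex.norm_exp_ofReal_mul_I q
    have h1 := condexp_re_mul hm θ hf
    have hle : (fun x => (θ * f x).re) ≤ᵐ[μ] fun x => ‖f x‖ := by
      refine Filter.Eventually.of_forall fun x => ?_
      calc (θ * f x).re ≤ ‖θ * f x‖ := Complex.re_le_norm _
        _ = ‖f x‖ := by rw [norm_mul, hθ1, one_mul]
    have hTint : Integrable (fun x => (θ * f x).re) μ := by
      set T : ℂ →L[ℝ] ℝ := Complex.reCLM.comp ((ContinuousLinearMap.mul ℝ ℂ) θ)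
      exact T.integrable_comp hf
    have h2 := condExp_mono (m := m) hTint hf.norm hle
    filter_upwards [h1, h2] with x hx1 hx2
    rw [hx1]; exact hx2
  have hall : ∀ᵐ x ∂μ, ∀ q : ℚ,
      (Complex.exp (q * Complex.I) * (μ[f|m]) x).re ≤ (μ[fun x => ‖f x‖|m]) x :=
    (ae_all_iff).mpr key
  filter_upwards [hall] with x hx
  set z := (μ[f|m]) x with hz
  set u := (μ[fun x => ‖f x‖|m]) x with hu
  have hcont : Continuous fun r : ℝ => (Complex.exp (r * Complex.I) * z).re :=
    Complex.continuous_re.comp ((Complex.continuous_exp.comp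
      ((Complex.continuous_ofReal).mul continuous_const)).mul continuous_const)
  have hC : IsClosed {r : ℝ | (Complex.exp (r * Complex.I) * z).re ≤ u} :=
    isClosed_le hcont continuous_const
  have hallr : ∀ r : ℝ, (Complex.exp (r * Complex.I) * z).re ≤ u := by
    intro r
    have hr : r ∈ closure (Set.range ((↑) : ℚ → ℝ)) := Rat.denseRange_cast r
    exact hC.closure_subset_iff.mpr (by rintro _ ⟨q, rfl⟩; exact hx q) hr
  have := hallr (-Complex.arg z)
  have habs : ∀ w : ℂ, Complex.exp ((-Complex.arg w : ℝ) * Complex.I) * w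
      = (‖w‖ : ℂ) := by
    intro w
    have hsum : ((-w.arg : ℝ) : ℂ) * Complex.I + (w.arg : ℝ) * Complex.I = 0 := by
      push_cast; ring
    calc Complex.exp ((-w.arg : ℝ) * Complex.I) * w
        = Complex.exp ((-w.arg : ℝ) * Complex.I)
            * ((‖w‖ : ℂ) * Complex.exp ((w.arg : ℝ) * Complex.I)) := by
          rw [Complex.norm_mul_exp_arg_mul_I w]
      _ = (‖w‖ : ℂ)
            * Complex.exp (((-w.arg : ℝ) : ℂ) * Complex.I + ((w.arg : ℝ) : ℂ) * Complex.I) := by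
          rw [Complex.exp_add]; ring
      _ = (‖w‖ : ℂ) := by rw [hsum, Complex.exp_zero, mul_one]
  rw [habs z, Complex.ofReal_re] at this
  simpa using this

/-- Tangent line inequality for `rpow`. -/
lemma rpow_tangent {p s q : ℝ} (hp : 1 ≤ p) (hs : 0 ≤ s) (hq : 0 < q) :
    q ^ p + p * q ^ (p - 1) * (s - q) ≤ s ^ p := by
  have hb := one_add_mul_self_le_rpow_one_add (s := (s - q) / q)
    (by rw [le_div_iff₀ hq]; nlinarith) hp
  have h1 : (1 : ℝ) + (s - q) / q = s / q := by field_simp; ring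
  rw [h1, Real.div_rpow hs hq.le] at hb
  have hqp : (0 : ℝ) < q ^ p := Real.rpow_pos_of_pos hq p
  have hb2 : (1 + p * ((s - q) / q)) * q ^ p ≤ s ^ p := by
    have := mul_le_mul_of_nonneg_right hb hqp.le
    rwa [div_mul_cancel₀ _ hqp.ne'] at this
  calc q ^ p + p * q ^ (p - 1) * (s - q)
      = (1 + p * ((s - q) / q)) * q ^ p := by
        rw [Real.rpow_sub hq, Real.rpow_one]; field_simp
    _ ≤ s ^ p := hb2

/-- Conditional Jensen inequality for `x ↦ x ^ p`, `1 ≤ p`. -/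
lemma condexp_rpow_le (hm : m ≤ m0) [SigmaFinite (μ.trim hm)] {p : ℝ} (hp : 1 ≤ p)
    {g : Ω → ℝ} (hg0 : 0 ≤ᵐ[μ] g) (hgi : Integrable g μ)
    (hgp : Integrable (fun x => g x ^ p) μ) [IsFiniteMeasure μ] :
    ∀ᵐ x ∂μ, (μ[g|m]) x ^ p ≤ (μ[fun x => g x ^ p|m]) x := by
  have key : ∀ q : {q : ℚ // 0 < q}, ∀ᵐ x ∂μ,
      ((q : ℚ) : ℝ) ^ p + p * ((q : ℚ) : ℝ) ^ (p - 1) * ((μ[g|m]) x - ((q : ℚ) : ℝ))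
        ≤ (μ[fun x => g x ^ p|m]) x := by
    rintro ⟨q, hq⟩
    set a : ℝ := ((q : ℚ) : ℝ) ^ p with ha
    set b : ℝ := p * ((q : ℚ) : ℝ) ^ (p - 1) with hb
    have hqr : (0 : ℝ) < ((q : ℚ) : ℝ) := by exact_mod_cast hq
    -- affine function below g ^ p
    have haff : (fun x => a + b * (g x - ((q : ℚ) : ℝ))) ≤ᵐ[μ] fun x => g x ^ p := by
      filter_upwards [hg0] with x hx
      exact rpow_tangent hp hx hqr
    have haffint : Integrable (fun x => a + b * (g x - ((q : ℚ) : ℝ))) μ := by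
      apply Integrable.add (integrable_const a)
      exact ((hgi.sub (integrable_const _)).const_mul b)
    have hmono := condExp_mono (m := m) haffint hgp haff
    -- compute condexp of the affine function
    have hrw : (fun x => a + b * (g x - ((q : ℚ) : ℝ)))
        = fun x => (a - b * ((q : ℚ) : ℝ)) + b • g x := by
      funext x; simp [smul_eq_mul]; ring
    have hcalc : μ[fun x => a + b * (g x - ((q : ℚ) : ℝ))|m]
        =ᵐ[μ] fun x => a + b * ((μ[g|m]) x - ((q : ℚ) : ℝ)) := by
      rw [hrw]
      have h1 : μ[(fun _ => a - b * ((q : ℚ) : ℝ)) + b • g|m]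
          =ᵐ[μ] μ[fun _ => a - b * ((q : ℚ) : ℝ)|m] + μ[b • g|m] :=
        condExp_add (integrable_const _) (hgi.smul b) m
      have h2 : μ[b • g|m] =ᵐ[μ] b • μ[g|m] := condExp_smul b g m
      have h3 : μ[fun _ : Ω => a - b * ((q : ℚ) : ℝ)|m] = fun _ => a - b * ((q : ℚ) : ℝ) :=
        condExp_const hm _
      have : μ[(fun _ : Ω => a - b * ((q : ℚ) : ℝ)) + b • g|m]
          =ᵐ[μ] (fun _ => a - b * ((q : ℚ) : ℝ)) + b • μ[g|m] := by
        refine h1.trans ?_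
        rw [h3]
        exact Filter.EventuallyEq.add (Filter.EventuallyEq.refl _ _) h2
      refine Filter.EventuallyEq.trans (by exact this) ?_
      refine Filter.Eventually.of_forall fun x => ?_
      simp [smul_eq_mul]; ring
    filter_upwards [hmono, hcalc] with x h1 h2
    rw [h2] at h1
    exact h1
  have hall := (ae_all_iff).mpr key
  have hg0' : 0 ≤ᵐ[μ] μ[g|m] := condExp_nonneg hg0
  filter_upwards [hall, hg0'] with x hx ht
  set t : ℝ := (μ[g|m]) x with hts
  set u : ℝ := (μ[fun x => g x ^ p|m]) x with hus
  -- the tangent bound holds for all real s > 0 (and s = 0) by density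
  have hcont : Continuous fun s : ℝ => s ^ p + p * s ^ (p - 1) * (t - s) := by
    have h1 : Continuous fun s : ℝ => s ^ p := by
      rw [continuous_iff_continuousAt]
      exact fun s => Real.continuousAt_rpow_const s p (Or.inr (by linarith))
    have h2 : Continuous fun s : ℝ => s ^ (p - 1) := by
      rw [continuous_iff_continuousAt]
      exact fun s => Real.continuousAt_rpow_const s (p - 1) (Or.inr (by linarith))
    exact h1.add (((continuous_const.mul h2).mul (continuous_const.sub continuous_id)))
  have hC : IsClosed {s : ℝ | s ^ p + p * s ^ (p - 1) * (t - s) ≤ u} :=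
    isClosed_le hcont continuous_const
  have hsub : ((↑) : ℚ → ℝ) '' {q : ℚ | 0 < q}
      ⊆ {s : ℝ | s ^ p + p * s ^ (p - 1) * (t - s) ≤ u} := by
    rintro _ ⟨q, hq, rfl⟩
    exact hx ⟨q, hq⟩
  have hcl : t ∈ closure (((↑) : ℚ → ℝ) '' {q : ℚ | 0 < q}) := by
    rw [Metric.mem_closure_iff]
    intro ε hε
    obtain ⟨q, hq1, hq2⟩ := exists_rat_btwn (show t < t + ε by linarith)
    refine ⟨(q : ℝ), ⟨q, show (0:ℚ) < q by exact_mod_cast lt_of_le_of_lt (show (0:ℝ) ≤ t from ht) hq1, rfl⟩, ?_⟩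
    rw [Real.dist_eq, abs_of_nonpos (by linarith)]
    linarith
  have htmem := hC.closure_subset_iff.mpr hsub hcl
  simpa using htmem

/-- `L^p` contraction of conditional expectation for complex valued functions. -/
lemma eLpNorm_condexp_le (hm : m ≤ m0) [IsProbabilityMeasure μ] {p : ℝ} (hp : 1 ≤ p)
    {f : Ω → ℂ} (hf : MemLp f (ENNReal.ofReal p) μ) :
    eLpNorm (μ[f|m]) (ENNReal.ofReal p) μ ≤ eLpNorm f (ENNReal.ofReal p) μ := by
  have hp0 : (0:ℝ) < p := by linarith
  have hq0 : ENNReal.ofReal p ≠ 0 := (ENNReal.ofReal_pos.mpr hp0).ne'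
  have hqt : ENNReal.ofReal p ≠ ∞ := ENNReal.ofReal_ne_top
  have hq1 : (1 : ℝ≥0∞) ≤ ENNReal.ofReal p := by
    rw [← ENNReal.ofReal_one]; exact ENNReal.ofReal_le_ofReal hp
  have hqto : (ENNReal.ofReal p).toReal = p := ENNReal.toReal_ofReal hp0.le
  have hfi : Integrable f μ := hf.integrable hq1
  set g : Ω → ℝ := fun x => ‖f x‖ with hg
  have hgi : Integrable g μ := hfi.norm
  have hgp : Integrable (fun x => g x ^ p) μ := by
    have := hf.integrable_norm_rpow hq0 hqt
    simpa [hqto] using this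
  have hg0 : 0 ≤ᵐ[μ] g := Filter.Eventually.of_forall fun x => norm_nonneg _
  have step1 : eLpNorm (μ[f|m]) (ENNReal.ofReal p) μ ≤ eLpNorm (μ[g|m]) (ENNReal.ofReal p) μ := by
    apply eLpNorm_mono_ae
    filter_upwards [norm_condexp_le hm hfi, condExp_nonneg (m := m) hg0] with x h1 h2
    calc ‖(μ[f|m]) x‖ ≤ (μ[g|m]) x := h1
      _ ≤ ‖(μ[g|m]) x‖ := le_abs_self _
  refine step1.trans ?_
  -- now compare the nonneg real function
  rw [eLpNorm_eq_lintegral_rpow_enorm_toReal hq0 hqt, eLpNorm_eq_lintegral_rpow_enorm_toReal hq0 hqt, hqto]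
  apply ENNReal.rpow_le_rpow _ (by positivity)
  have hEg0 := condExp_nonneg (m := m) hg0
  have hEgp0 := condExp_nonneg (m := m)
    (Filter.Eventually.of_forall fun x => Real.rpow_nonneg (norm_nonneg (f x)) p :
      0 ≤ᵐ[μ] fun x => g x ^ p)
  have hjensen := condexp_rpow_le hm hp hg0 hgi hgp
  calc ∫⁻ x, ‖(μ[g|m]) x‖ₑ ^ p ∂μ
      ≤ ∫⁻ x, ENNReal.ofReal ((μ[fun x => g x ^ p|m]) x) ∂μ := by
        apply lintegral_mono_ae
        filter_upwards [hEg0, hjensen] with x h0 hj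
        rw [Real.enorm_eq_ofReal h0, ENNReal.ofReal_rpow_of_nonneg h0 hp0.le]
        exact ENNReal.ofReal_le_ofReal hj
    _ = ENNReal.ofReal (∫ x, (μ[fun x => g x ^ p|m]) x ∂μ) :=
        (ofReal_integral_eq_lintegral_ofReal integrable_condExp hEgp0).symm
    _ = ENNReal.ofReal (∫ x, g x ^ p ∂μ) := by rw [integral_condExp hm]
    _ = ∫⁻ x, ENNReal.ofReal (g x ^ p) ∂μ :=
        ofReal_integral_eq_lintegral_ofReal hgp
          (Filter.Eventually.of_forall fun x => Real.rpow_nonneg (norm_nonneg _) p)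
    _ = ∫⁻ x, ‖f x‖ₑ ^ p ∂μ := by
        apply lintegral_congr fun x => ?_
        rw [← ENNReal.ofReal_rpow_of_nonneg (norm_nonneg _) hp0.le, ofReal_norm_eq_enorm]

lemma core {ma mb : MeasurableSpace Ω} (hma : ma ≤ m0) (hmb : mb ≤ m0) [IsProbabilityMeasure μ]
    {p : ℝ} (hp : 1 ≤ p) {f : Ω → ℂ} (hf : MemLp f (ENNReal.ofReal p) μ)
    {c : ℝ} (hc0 : 0 < c) (hc1 : c < 1)
    (hM : eLpNorm (μ[(μ[f|mb])|ma]) (ENNReal.ofReal p) μ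
      ≤ ENNReal.ofReal c * eLpNorm f (ENNReal.ofReal p) μ) :
    eLpNorm f (ENNReal.ofReal p) μ ≤ ENNReal.ofReal (1 / (1 - c)) *
      (eLpNorm (f - μ[f|ma]) (ENNReal.ofReal p) μ
        + eLpNorm (f - μ[f|mb]) (ENNReal.ofReal p) μ) := by
  set q := ENNReal.ofReal p with hq
  have hq1 : (1 : ℝ≥0∞) ≤ q := by
    rw [hq, ← ENNReal.ofReal_one]; exact ENNReal.ofReal_le_ofReal hp
  have hfi : Integrable f μ := hf.integrable hq1
  have haes_a : AEStronglyMeasurable[m0] (μ[f|ma]) μ :=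
    (stronglyMeasurable_condExp.mono hma).aestronglyMeasurable
  have haes_g : AEStronglyMeasurable[m0] (μ[(μ[f|mb])|ma]) μ :=
    (stronglyMeasurable_condExp.mono hma).aestronglyMeasurable
  have hEb : MemLp (μ[f|mb]) q μ :=
    ⟨(stronglyMeasurable_condExp.mono hmb).aestronglyMeasurable,
      (eLpNorm_condexp_le hmb hp hf).trans_lt hf.2⟩
  have step4 : eLpNorm (μ[f - μ[f|mb]|ma]) q μ ≤ eLpNorm (f - μ[f|mb]) q μ :=
    eLpNorm_condexp_le hma hp (hf.sub hEb)
  have step3 : eLpNorm (μ[f|ma] - μ[(μ[f|mb])|ma]) q μ = eLpNorm (μ[f - μ[f|mb]|ma]) q μ :=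
    eLpNorm_congr_ae (condExp_sub hfi integrable_condExp ma).symm
  have tri1 : eLpNorm f q μ
      ≤ eLpNorm (f - μ[(μ[f|mb])|ma]) q μ + eLpNorm (μ[(μ[f|mb])|ma]) q μ := by
    conv_lhs => rw [← sub_add_cancel f (μ[(μ[f|mb])|ma])]
    exact eLpNorm_add_le (hf.aestronglyMeasurable.sub haes_g) haes_g hq1
  have tri2 : eLpNorm (f - μ[(μ[f|mb])|ma]) q μ
      ≤ eLpNorm (f - μ[f|ma]) q μ + eLpNorm (μ[f|ma] - μ[(μ[f|mb])|ma]) q μ := by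
    rw [show f - μ[(μ[f|mb])|ma] = (f - μ[f|ma]) + (μ[f|ma] - μ[(μ[f|mb])|ma]) from
      (sub_add_sub_cancel _ _ _).symm]
    exact eLpNorm_add_le (hf.aestronglyMeasurable.sub haes_a) (haes_a.sub haes_g) hq1
  set N := eLpNorm f q μ with hN
  set A := eLpNorm (f - μ[f|ma]) q μ with hA
  set B := eLpNorm (f - μ[f|mb]) q μ with hB
  have hNt : N ≠ ∞ := hf.eLpNorm_ne_top
  have main : N ≤ A + B + ENNReal.ofReal c * N := by
    calc N ≤ eLpNorm (f - μ[(μ[f|mb])|ma]) q μ + eLpNorm (μ[(μ[f|mb])|ma]) q μ := tri1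
      _ ≤ (A + eLpNorm (μ[f|ma] - μ[(μ[f|mb])|ma]) q μ) + eLpNorm (μ[(μ[f|mb])|ma]) q μ := by
          gcongr
      _ ≤ (A + B) + ENNReal.ofReal c * N :=
          add_le_add (add_le_add_right (step3.trans_le step4) A) hM
      _ = A + B + ENNReal.ofReal c * N := by ring
  have hd : (0:ℝ) < 1 - c := by linarith
  have hd0 : ENNReal.ofReal (1 - c) ≠ 0 := (ENNReal.ofReal_pos.mpr hd).ne'
  have hdt : ENNReal.ofReal (1 - c) ≠ ∞ := ENNReal.ofReal_ne_top
  have h1 : ENNReal.ofReal (1 - c) * N ≤ A + B := by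
    have he : ENNReal.ofReal (1 - c) = 1 - ENNReal.ofReal c := by
      rw [ENNReal.ofReal_sub 1 hc0.le, ENNReal.ofReal_one]
    rw [he, ENNReal.sub_mul (fun _ _ => hNt), one_mul, tsub_le_iff_right]
    exact main
  calc N = (ENNReal.ofReal (1 - c))⁻¹ * (ENNReal.ofReal (1 - c) * N) := by
        rw [← mul_assoc, ENNReal.inv_mul_cancel hd0 hdt, one_mul]
    _ ≤ (ENNReal.ofReal (1 - c))⁻¹ * (A + B) := mul_le_mul_right h1 _
    _ = ENNReal.ofReal (1 / (1 - c)) * (A + B) := by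
        rw [one_div, ENNReal.ofReal_inv_of_pos hd]

end Statement3Aux

open Statement3Aux in
/-- reduction to strict contractions.  On a probability space, if
`min(‖E_a E_b f‖_p, ‖E_b E_a f‖_p) ≤ c ‖f‖_p` for all mean-zero `f ∈ L_p`, then every
`φ ∈ L_p` satisfies
`‖φ - ∫φ‖_p ≤ (1/(1-c)) (‖φ - E_a φ‖_p + ‖φ - E_b φ‖_p)`. -/
theorem statement3 {Ω : Type*} {m0 : MeasurableSpace Ω} (μ : Measure Ω)
    [IsProbabilityMeasure μ] (ma mb : MeasurableSpace Ω) (hma : ma ≤ m0) (hmb : mb ≤ m0)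
    (p : ℝ) (hp : 1 ≤ p) (c : ℝ) (hc0 : 0 < c) (hc1 : c < 1)
    (H : ∀ f : Ω → ℂ, MemLp f (ENNReal.ofReal p) μ → ∫ x, f x ∂μ = 0 →
      min (eLpNorm (μ[(μ[f|mb])|ma]) (ENNReal.ofReal p) μ)
          (eLpNorm (μ[(μ[f|ma])|mb]) (ENNReal.ofReal p) μ)
        ≤ ENNReal.ofReal c * eLpNorm f (ENNReal.ofReal p) μ) :
    ∀ φ : Ω → ℂ, MemLp φ (ENNReal.ofReal p) μ →
      eLpNorm (fun x => φ x - ∫ y, φ y ∂μ) (ENNReal.ofReal p) μ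
        ≤ ENNReal.ofReal (1 / (1 - c)) *
          (eLpNorm (φ - μ[φ|ma]) (ENNReal.ofReal p) μ
            + eLpNorm (φ - μ[φ|mb]) (ENNReal.ofReal p) μ) := by
  intro φ hφ
  have hq1 : (1:ℝ≥0∞) ≤ ENNReal.ofReal p := by
    rw [← ENNReal.ofReal_one]; exact ENNReal.ofReal_le_ofReal hp
  have hφi : Integrable φ μ := hφ.integrable hq1
  set f : Ω → ℂ := fun x => φ x - ∫ y, φ y ∂μ with hfdef
  have hfeq : f = φ - fun _ => ∫ y, φ y ∂μ := rfl
  have hf : MemLp f (ENNReal.ofReal p) μ := hφ.sub (memLp_const _)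
  have hf0 : ∫ x, f x ∂μ = 0 := by
    rw [hfeq]
    simp only [Pi.sub_apply]
    rw [integral_sub hφi (integrable_const _), integral_const]
    simp
  have hcondexp : ∀ (m : MeasurableSpace Ω), m ≤ m0 →
      eLpNorm (f - μ[f|m]) (ENNReal.ofReal p) μ = eLpNorm (φ - μ[φ|m]) (ENNReal.ofReal p) μ := by
    intro m hm
    have hc : μ[f|m] =ᵐ[μ] fun x => (μ[φ|m]) x - ∫ y, φ y ∂μ := by
      rw [hfeq]
      refine (condExp_sub hφi (integrable_const _) m).trans ?_
      rw [condExp_const hm]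
      exact Filter.EventuallyEq.rfl
    refine eLpNorm_congr_ae ?_
    filter_upwards [hc] with x hx
    simp only [Pi.sub_apply, hx]
    simp only [hfdef]
    ring
  have hmin := H f hf hf0
  rcases min_le_iff.mp hmin with h | h
  · have hcore := core hma hmb hp hf hc0 hc1 h
    rwa [hcondexp ma hma, hcondexp mb hmb] at hcore
  · have hcore := core hmb hma hp hf hc0 hc1 h
    rwa [hcondexp ma hma, hcondexp mb hmb, add_comm] at hcore
end

section
/- Let (Ω,Σ,μ) be a σ-finite measure space, Σ_a and Σ_b atomic σ-subalgebras of Σ with atom families Π_a, Π_b, let A_0 be either an element of Π_a or the empty set, and let c > 0. Assume that for every A ∈ Π_a∖{A_0}: Σ_{B∈R_A} |R_B|·μ(A∩B)²/(μ(A)μ(B)) ≤ c. Then every Σ_a-measurable φ ∈ L_2(μ) vanishing μ-a.e. on A_0 satisfies ‖E_{Σ_b}φ‖_{L_2(μ)}² ≤ c·‖φ‖_{L_2(μ)}². -/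
open MeasureTheory ENNReal

namespace AtomicPartition

variable {Ω : Type*} {m : MeasurableSpace Ω} {μ : Measure Ω}

lemma subset_of_measurableSet (P : AtomicPartition μ) {s : Set Ω}
    (hs : MeasurableSet[P.sigma] s) {j : P.ι} (h : (P.atom j ∩ s).Nonempty) : P.atom j ⊆ s := by
  revert j
  have key : ∀ j : P.ι, (P.atom j ∩ s).Nonempty → P.atom j ⊆ s := ?_
  · exact key
  refine MeasurableSpace.generateFrom_induction (Set.range P.atom)
    (fun s _ => ∀ j : P.ι, (P.atom j ∩ s).Nonempty → P.atom j ⊆ s) ?_ ?_ ?_ ?_ s hs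
  · rintro t ⟨k, rfl⟩ - j ⟨z, hzj, hzk⟩
    rcases eq_or_ne j k with rfl | hne
    · exact subset_rfl
    · exact absurd rfl ((P.disjoint hne).ne_of_mem hzj hzk)
  · rintro j ⟨z, -, hz⟩; exact hz.elim
  · rintro t ht IH j ⟨z, hzj, hzt⟩ w hw hwt
    exact hzt (IH j ⟨w, hw, hwt⟩ hzj)
  · rintro t ht IH j ⟨z, hzj, hzt⟩
    obtain ⟨n, hn⟩ := Set.mem_iUnion.mp hzt
    exact (IH n j ⟨z, hzj, hn⟩).trans (Set.subset_iUnion _ n)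

lemma eq_on_atom (P : AtomicPartition μ) {E : Type*} [MeasurableSpace E]
    [MeasurableSingletonClass E] {φ : Ω → E} (hφ : Measurable[P.sigma] φ) {i : P.ι}
    {x y : Ω} (hx : x ∈ P.atom i) (hy : y ∈ P.atom i) : φ x = φ y := by
  have hs : MeasurableSet[P.sigma] (φ ⁻¹' {φ y}) := hφ (measurableSet_singleton _)
  exact P.subset_of_measurableSet hs ⟨y, hy, rfl⟩ hx

lemma atom_nonempty (P : AtomicPartition μ) (i : P.ι) : (P.atom i).Nonempty :=
  MeasureTheory.nonempty_of_measure_ne_zero (P.pos i).ne'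

lemma lintegral_eq_tsum (P : AtomicPartition μ) (g : Ω → ℝ≥0∞) :
    ∫⁻ x, g x ∂μ = ∑' i, ∫⁻ x in P.atom i, g x ∂μ := by
  haveI := P.countable
  rw [← setLIntegral_univ, ← P.cover, lintegral_iUnion P.measurableSet P.disjoint]

end AtomicPartition

lemma tsum_sq_le_card_mul_tsum_sq {ι : Type*} [Countable ι] (f : ι → ℝ≥0∞) :
    (∑' i, f i) ^ 2 ≤ (∑' _i : ι, (1 : ℝ≥0∞)) * ∑' i, f i ^ 2 := by
  letI : MeasurableSpace ι := ⊤
  haveI : MeasurableSingletonClass ι := ⟨fun _ => trivial⟩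
  have hf : Measurable f := fun _ _ => trivial
  have h := ENNReal.lintegral_mul_le_Lp_mul_Lq (Measure.count : Measure ι)
    (⟨by norm_num, by norm_num, by norm_num⟩ : Real.HolderConjugate 2 2) hf.aemeasurable
    (aemeasurable_const (b := (1:ℝ≥0∞)))
  simp only [Pi.mul_apply, mul_one, lintegral_count, ENNReal.one_rpow] at h
  have h2 : (∑' i, f i) ^ 2 ≤ ((∑' i, f i ^ (2:ℝ)) ^ (1/2:ℝ) * (∑' _i : ι, (1:ℝ≥0∞)) ^ (1/2:ℝ)) ^ 2 := by
    rw [sq, sq]; exact mul_le_mul' h h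
  calc (∑' i, f i) ^ 2 ≤ _ := h2
    _ = (∑' i, f i ^ (2:ℝ)) * (∑' _i : ι, (1:ℝ≥0∞)) := by
        rw [mul_pow, ← ENNReal.rpow_natCast _ 2, ← ENNReal.rpow_natCast _ 2,
          ← ENNReal.rpow_mul, ← ENNReal.rpow_mul]
        norm_num
    _ = (∑' _i : ι, (1:ℝ≥0∞)) * ∑' i, f i ^ 2 := by
        rw [mul_comm]; congr 1; exact tsum_congr fun i => by
          rw [← ENNReal.rpow_natCast]; norm_num

lemma sq_eLpNorm_two {Ω : Type*} {m : MeasurableSpace Ω} (μ : Measure Ω) (f : Ω → ℂ) :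
    eLpNorm f 2 μ ^ 2 = ∫⁻ x, (‖f x‖₊ : ℝ≥0∞) ^ 2 ∂μ := by
  rw [eLpNorm_eq_lintegral_rpow_enorm_toReal two_ne_zero ENNReal.ofNat_ne_top, ENNReal.toReal_ofNat,
    ← ENNReal.rpow_natCast _ 2, ← ENNReal.rpow_mul]
  norm_num
  rfl


/-- the `L₂` estimate for `Σ_a`-measurable functions.  If
`∑_{B ∈ R_A} |R_B| μ(A∩B)²/(μ(A)μ(B)) ≤ c` for every atom `A ≠ A₀` of `Σ_a`, then every
`Σ_a`-measurable `φ ∈ L₂(μ)` vanishing a.e. on `A₀` satisfies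
`‖E_{Σ_b} φ‖₂² ≤ c ‖φ‖₂²`. -/
theorem statement4 {Ω : Type*} [MeasurableSpace Ω] (μ : Measure Ω) [SigmaFinite μ]
    (Pa Pb : AtomicPartition μ) (A0 : Option Pa.ι) (c : ℝ) (hc : 0 < c)
    (H : ∀ i : Pa.ι, some i ≠ A0 → atomSum μ Pa Pb i ≤ ENNReal.ofReal c) :
    ∀ φ : Ω → ℂ, MemLp φ 2 μ → Measurable[Pa.sigma] φ →
      (∀ᵐ x ∂μ.restrict (A0.elim ∅ Pa.atom), φ x = 0) →
      eLpNorm (Pb.condExp φ) 2 μ ^ 2 ≤ ENNReal.ofReal c * eLpNorm φ 2 μ ^ 2 := by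
  intro φ hφ2 hφm hφ0
  haveI := Pa.countable
  haveI := Pb.countable
  classical
  choose pt hpt using Pa.atom_nonempty
  set v : Pa.ι → ℂ := fun i => φ (pt i) with hv
  have hval : ∀ i, ∀ x ∈ Pa.atom i, φ x = v i := fun i x hx => Pa.eq_on_atom hφm hx (hpt i)
  set b : Pb.ι → ℂ := fun j => (μ (Pb.atom j)).toReal⁻¹ • ∫ y in Pb.atom j, φ y ∂μ with hbdef
  have hbval : ∀ j, ∀ x ∈ Pb.atom j, Pb.condExp φ x = b j := by
    intro j x hx
    unfold AtomicPartition.condExp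
    rw [tsum_eq_single j ?_]
    · rw [Set.indicator_of_mem hx]
    · intro k hk
      have hnot : x ∉ Pb.atom k := fun hxk => (Pb.disjoint hk).ne_of_mem hxk hx rfl
      exact Set.indicator_of_notMem hnot _
  set A : Pa.ι → ℝ≥0∞ := fun i => μ (Pa.atom i) with hA
  set B : Pb.ι → ℝ≥0∞ := fun j => μ (Pb.atom j) with hB
  set mm : Pa.ι → Pb.ι → ℝ≥0∞ := fun i j => μ (Pa.atom i ∩ Pb.atom j) with hmm
  set w : Pa.ι → ℝ≥0∞ := fun i => (‖v i‖₊ : ℝ≥0∞) ^ 2 * A i with hw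
  have hφnorm : eLpNorm φ 2 μ ^ 2 = ∑' i, w i := by
    rw [sq_eLpNorm_two, Pa.lintegral_eq_tsum]
    refine tsum_congr fun i => ?_
    rw [setLIntegral_congr_fun (Pa.measurableSet i)
      (fun x hx => by rw [hval i x hx]), setLIntegral_const]
  have hEnorm : eLpNorm (Pb.condExp φ) 2 μ ^ 2 = ∑' j, (‖b j‖₊ : ℝ≥0∞) ^ 2 * B j := by
    rw [sq_eLpNorm_two, Pb.lintegral_eq_tsum]
    refine tsum_congr fun j => ?_
    rw [setLIntegral_congr_fun (Pb.measurableSet j)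
      (fun x hx => by rw [hbval j x hx]), setLIntegral_const]
  have key : ∀ j, (‖b j‖₊ : ℝ≥0∞) ^ 2 * B j ≤
      ∑' i, (rCard μ Pa Pb j * mm i j ^ 2 / (A i * B j)) * w i := by
    intro j
    have hB0 : B j ≠ 0 := (Pb.pos j).ne'
    have hBt : B j ≠ ∞ := (Pb.lt_top j).ne
    set f : Pa.ι → ℝ≥0∞ := fun i => (‖v i‖₊ : ℝ≥0∞) * mm i j with hf
    have hint : (‖∫ y in Pb.atom j, φ y ∂μ‖₊ : ℝ≥0∞) ≤ ∑' i, f i := by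
      refine le_trans (enorm_integral_le_lintegral_enorm _) ?_
      have hcover : ⋃ i, (Pa.atom i ∩ Pb.atom j) = Pb.atom j := by
        rw [← Set.iUnion_inter, Pa.cover, Set.univ_inter]
      rw [← hcover, lintegral_iUnion (fun i => (Pa.measurableSet i).inter (Pb.measurableSet j))
        (fun i k hik => Disjoint.mono Set.inter_subset_left Set.inter_subset_left
          (Pa.disjoint hik))]
      refine ENNReal.tsum_le_tsum fun i => ?_
      rw [setLIntegral_congr_fun ((Pa.measurableSet i).inter (Pb.measurableSet j))
        (fun x hx => by rw [hval i x hx.1]), setLIntegral_const]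
      rfl
    have hbnorm : (‖b j‖₊ : ℝ≥0∞) ≤ (B j)⁻¹ * ∑' i, f i := by
      have heq : (‖b j‖₊ : ℝ≥0∞) = (B j)⁻¹ * ‖∫ y in Pb.atom j, φ y ∂μ‖₊ := by
        rw [hbdef]
        rw [nnnorm_smul, ENNReal.coe_mul]
        congr 1
        rw [← enorm_eq_nnnorm, Real.enorm_eq_ofReal (inv_nonneg.2 ENNReal.toReal_nonneg),
          ENNReal.ofReal_inv_of_pos (ENNReal.toReal_pos hB0 hBt), ENNReal.ofReal_toReal hBt]
      rw [heq]
      exact mul_le_mul' le_rfl hint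
    have hCS : (∑' i, f i) ^ 2 ≤ rCard μ Pa Pb j * ∑' i, f i ^ 2 := by
      have hsupp : Function.support f ⊆ {i | 0 < μ (Pa.atom i ∩ Pb.atom j)} := by
        intro i hi
        simp only [Set.mem_setOf_eq, pos_iff_ne_zero]
        intro h0
        exact hi (by simp [hf, hmm, h0])
      have h1 : ∑' i, f i = ∑' i : {i : Pa.ι // 0 < μ (Pa.atom i ∩ Pb.atom j)}, f i := by
        have h1' := tsum_subtype {i : Pa.ι | 0 < μ (Pa.atom i ∩ Pb.atom j)} f
        rw [Set.indicator_eq_self.2 hsupp] at h1'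
        exact h1'.symm
      have h2 : ∑' i : {i : Pa.ι // 0 < μ (Pa.atom i ∩ Pb.atom j)}, f (i : Pa.ι) ^ 2
          ≤ ∑' i, f i ^ 2 := by
        have h2' := tsum_subtype {i : Pa.ι | 0 < μ (Pa.atom i ∩ Pb.atom j)}
          (fun i => f i ^ 2)
        exact le_of_eq h2' |>.trans
          (ENNReal.tsum_le_tsum fun i => Set.indicator_le_self _ _ i)
      calc (∑' i, f i) ^ 2
          = (∑' i : {i : Pa.ι // 0 < μ (Pa.atom i ∩ Pb.atom j)}, f i) ^ 2 := by rw [h1]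
        _ ≤ (∑' _i : {i : Pa.ι // 0 < μ (Pa.atom i ∩ Pb.atom j)}, (1:ℝ≥0∞)) *
            ∑' i : {i : Pa.ι // 0 < μ (Pa.atom i ∩ Pb.atom j)}, f (i : Pa.ι) ^ 2 :=
          tsum_sq_le_card_mul_tsum_sq _
        _ ≤ rCard μ Pa Pb j * ∑' i, f i ^ 2 := mul_le_mul' le_rfl h2
    calc (‖b j‖₊ : ℝ≥0∞) ^ 2 * B j
        ≤ ((B j)⁻¹ * ∑' i, f i) ^ 2 * B j := by
          have := hbnorm
          exact mul_le_mul' (by rw [sq, sq]; exact mul_le_mul' this this) le_rfl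
      _ = (B j)⁻¹ * (∑' i, f i) ^ 2 := by
          rw [mul_pow, show (B j)⁻¹ ^ 2 * (∑' i, f i) ^ 2 * B j
            = (B j)⁻¹ * (∑' i, f i) ^ 2 * ((B j)⁻¹ * B j) by ring,
            ENNReal.inv_mul_cancel hB0 hBt, mul_one]
      _ ≤ (B j)⁻¹ * (rCard μ Pa Pb j * ∑' i, f i ^ 2) := mul_le_mul' le_rfl hCS
      _ = ∑' i, (B j)⁻¹ * (rCard μ Pa Pb j * f i ^ 2) := by
          rw [ENNReal.tsum_mul_left, ENNReal.tsum_mul_left]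
      _ = ∑' i, (rCard μ Pa Pb j * mm i j ^ 2 / (A i * B j)) * w i := by
          refine tsum_congr fun i => ?_
          have hA0 : A i ≠ 0 := (Pa.pos i).ne'
          have hAt : A i ≠ ∞ := (Pa.lt_top i).ne
          rw [div_eq_mul_inv, ENNReal.mul_inv (Or.inl hA0) (Or.inl hAt), hf, hw, mul_pow,
            show rCard μ Pa Pb j * mm i j ^ 2 * ((A i)⁻¹ * (B j)⁻¹) *
                ((‖v i‖₊ : ℝ≥0∞) ^ 2 * A i)
              = (B j)⁻¹ * (rCard μ Pa Pb j * ((‖v i‖₊ : ℝ≥0∞) ^ 2 * mm i j ^ 2)) *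
                ((A i)⁻¹ * A i) by ring,
            ENNReal.inv_mul_cancel hA0 hAt, mul_one]
  rw [hEnorm, hφnorm]
  calc ∑' j, (‖b j‖₊ : ℝ≥0∞) ^ 2 * B j
      ≤ ∑' j, ∑' i, (rCard μ Pa Pb j * mm i j ^ 2 / (A i * B j)) * w i :=
        ENNReal.tsum_le_tsum key
    _ = ∑' i, ∑' j, (rCard μ Pa Pb j * mm i j ^ 2 / (A i * B j)) * w i := ENNReal.tsum_comm
    _ = ∑' i, atomSum μ Pa Pb i * w i := by
        refine tsum_congr fun i => ?_
        rw [ENNReal.tsum_mul_right]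
        rfl
    _ ≤ ∑' i, ENNReal.ofReal c * w i := by
        refine ENNReal.tsum_le_tsum fun i => ?_
        by_cases h : some i = A0
        · have hv0 : v i = 0 := by
            by_contra hne
            have hA0set : (A0.elim ∅ Pa.atom : Set Ω) = Pa.atom i := by rw [← h]; rfl
            rw [hA0set] at hφ0
            have h0 : μ.restrict (Pa.atom i) {x | ¬ φ x = 0} = 0 := ae_iff.mp hφ0
            have hsub : Pa.atom i ⊆ {x | ¬ φ x = 0} := fun x hx => by
              simp only [Set.mem_setOf_eq, hval i x hx]; exact hne
            have hle : μ.restrict (Pa.atom i) (Pa.atom i) = 0 :=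
              le_antisymm (h0 ▸ measure_mono hsub) zero_le
            rw [Measure.restrict_apply_self] at hle
            exact (Pa.pos i).ne' hle
          simp [hw, hv0]
        · exact mul_le_mul' (H i h) le_rfl
    _ = ENNReal.ofReal c * ∑' i, w i := ENNReal.tsum_mul_left
end

section
/- Let (Ω,Σ,μ) be a probability space, Σ_a a sub-σ-algebra of Σ with conditional expectation E_{Σ_a}, Σ_b an atomic σ-subalgebra of Σ with atom family Π_b, B_0 ∈ Π_b, and 0 < c ≤ 1. If ‖E_{Σ_a}φ‖_{L_2(μ)} ≤ c‖φ‖_{L_2(μ)} for every Σ_b-measurable φ ∈ L_2(μ) vanishing μ-a.e. on B_0, then ‖E_{Σ_a}φ‖_{L_2(μ)} ≤ c‖φ‖_{L_2(μ)} for every Σ_b-measurable φ ∈ L_2(μ) with ∫_Ω φ dμ = 0. -/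
open MeasureTheory ENNReal

private lemma atom_subset_or_disjoint_aux {Ω : Type*} {ι : Type} (atom : ι → Set Ω)
    (hdisj : Pairwise (Function.onFun Disjoint atom)) {S : Set Ω}
    (hS : MeasurableSet[MeasurableSpace.generateFrom (Set.range atom)] S) (j : ι) :
    atom j ⊆ S ∨ Disjoint (atom j) S := by
  induction S, hS using MeasurableSpace.generateFrom_induction with
  | hC t ht _ =>
    obtain ⟨i, rfl⟩ := ht
    by_cases h : i = j
    · exact Or.inl (h ▸ subset_refl _)
    · exact Or.inr (hdisj h).symm
  | empty => exact Or.inr (Set.disjoint_empty _)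
  | compl t ht ih =>
    rcases ih with h | h
    · exact Or.inr (Set.disjoint_compl_right_iff_subset.mpr h)
    · exact Or.inl (Set.subset_compl_iff_disjoint_right.mpr h)
  | iUnion s hs ih =>
    by_cases h : ∃ n, atom j ⊆ s n
    · exact Or.inl (h.choose_spec.trans (Set.subset_iUnion _ _))
    · push_neg at h
      refine Or.inr (Set.disjoint_iUnion_right.mpr fun n => ?_)
      rcases ih n with h' | h'
      · exact absurd h' (h n)
      · exact h'

private lemma constant_on_atom_aux {Ω : Type*} {m : MeasurableSpace Ω} {μ : MeasureTheory.Measure Ω}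
    (P : AtomicPartition μ) {φ : Ω → ℂ} (hφ : Measurable[P.sigma] φ) (j : P.ι)
    {x y : Ω} (hx : x ∈ P.atom j) (hy : y ∈ P.atom j) : φ x = φ y := by
  have hS : MeasurableSet[P.sigma] (φ ⁻¹' {φ y}) := hφ (measurableSet_singleton _)
  rcases atom_subset_or_disjoint_aux P.atom P.disjoint hS j with h | h
  · exact h hx
  · exact absurd rfl (Set.disjoint_left.mp h hy)

set_option maxHeartbeats 1000000 in
/-- On a probability space, if `‖E_{Σ_a} φ‖₂ ≤ c ‖φ‖₂` for every
`Σ_b`-measurable `φ ∈ L₂` vanishing a.e. on the distinguished atom `B₀`, then the same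
inequality holds for every `Σ_b`-measurable `φ ∈ L₂` with mean zero. -/
theorem statement5 {Ω : Type*} {m0 : MeasurableSpace Ω} (μ : Measure Ω)
    [IsProbabilityMeasure μ] (Pb : AtomicPartition μ) (j0 : Pb.ι)
    (ma : MeasurableSpace Ω) (hma : ma ≤ m0)
    (c : ℝ) (hc0 : 0 < c) (hc1 : c ≤ 1)
    (H : ∀ φ : Ω → ℂ, MemLp φ 2 μ → Measurable[Pb.sigma] φ →
      (∀ᵐ x ∂μ.restrict (Pb.atom j0), φ x = 0) →
      eLpNorm (μ[φ|ma]) 2 μ ≤ ENNReal.ofReal c * eLpNorm φ 2 μ) :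
    ∀ φ : Ω → ℂ, MemLp φ 2 μ → Measurable[Pb.sigma] φ → ∫ x, φ x ∂μ = 0 →
      eLpNorm (μ[φ|ma]) 2 μ ≤ ENNReal.ofReal c * eLpNorm φ 2 μ := by
  
  intro φ hφ hφm hφint0
  have hne : (Pb.atom j0).Nonempty := by
    rw [Set.nonempty_iff_ne_empty]
    intro h
    have := Pb.pos j0
    rw [h, measure_empty] at this
    exact lt_irrefl _ this
  obtain ⟨x₀, hx₀⟩ := hne
  set k : ℂ := φ x₀ with hk
  set ψ : Ω → ℂ := fun x => φ x - k with hψdef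
  have hψmem : MemLp ψ 2 μ := hφ.sub (memLp_const k)
  have hψmeas : Measurable[Pb.sigma] ψ := hφm.sub measurable_const
  have hψ0 : ∀ᵐ x ∂μ.restrict (Pb.atom j0), ψ x = 0 := by
    refine ae_restrict_of_forall_mem (Pb.measurableSet j0) fun x hx => ?_
    simp only [hψdef, hk, sub_eq_zero]
    exact constant_on_atom_aux Pb hφm j0 hx hx₀
  have h1 := H ψ hψmem hψmeas hψ0
  have hφint : Integrable φ μ := hφ.integrable one_le_two
  have hψint : Integrable ψ μ := hψmem.integrable one_le_two
  have hIψ : ∫ x, ψ x ∂μ = -k := by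
    simp [hψdef, integral_sub hφint (integrable_const k), hφint0, measure_univ]
  have hce : μ[φ|ma] =ᵐ[μ] fun x => (μ[ψ|ma]) x + k := by
    have h2 : μ[ψ|ma] =ᵐ[μ] μ[φ|ma] - μ[(fun _ => k)|ma] :=
      condExp_sub hφint (integrable_const k) ma
    have h3 : μ[(fun _ : Ω => k)|ma] = fun _ => k := condExp_const hma k
    filter_upwards [h2] with x hx
    rw [h3] at hx
    simp only [Pi.sub_apply] at hx
    rw [hx]
    ring
  have hψce_mem : MemLp (μ[ψ|ma]) 2 μ := by
    refine ⟨(stronglyMeasurable_condExp.mono hma).aestronglyMeasurable, lt_of_le_of_lt h1 ?_⟩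
    exact ENNReal.mul_lt_top ENNReal.ofReal_lt_top hψmem.2
  have hφce_mem : MemLp (μ[φ|ma]) 2 μ :=
    MemLp.ae_eq hce.symm (hψce_mem.add (memLp_const k))
  set Φ := hφ.toLp φ with hΦdef
  set Ψ := hψmem.toLp ψ with hΨdef
  set K := (memLp_const (μ := μ) k).toLp (fun _ => k) with hKdef
  set F := hφce_mem.toLp (μ[φ|ma]) with hFdef
  set G := hψce_mem.toLp (μ[ψ|ma]) with hGdef
  have hΦeq : Φ = Ψ + K := by
    apply Lp.ext
    filter_upwards [hφ.coeFn_toLp, Lp.coeFn_add Ψ K, hψmem.coeFn_toLp,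
      (memLp_const (μ := μ) k).coeFn_toLp] with x e1 e2 e3 e4
    rw [e1, e2]
    simp only [Pi.add_apply]
    rw [e3, e4]
    simp [hψdef]
  have hFeq : F = G + K := by
    apply Lp.ext
    filter_upwards [hφce_mem.coeFn_toLp, Lp.coeFn_add G K, hψce_mem.coeFn_toLp,
      (memLp_const (μ := μ) k).coeFn_toLp, hce] with x e1 e2 e3 e4 e5
    rw [e1, e2]
    simp only [Pi.add_apply]
    rw [e3, e4, e5]
  have hG_le : ‖G‖ ≤ c * ‖Ψ‖ := by
    rw [hGdef, hΨdef, Lp.norm_toLp, Lp.norm_toLp]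
    calc (eLpNorm (μ[ψ|ma]) 2 μ).toReal
        ≤ (ENNReal.ofReal c * eLpNorm ψ 2 μ).toReal :=
          ENNReal.toReal_mono (ENNReal.mul_ne_top ENNReal.ofReal_ne_top hψmem.2.ne) h1
      _ = c * (eLpNorm ψ 2 μ).toReal := by
          rw [ENNReal.toReal_mul, ENNReal.toReal_ofReal hc0.le]
  have hinner_K : ∀ (f : Ω → ℂ) (hf : MemLp f 2 μ),
      (inner ℂ (hf.toLp f) K : ℂ) = (starRingEnd ℂ) (∫ x, f x ∂μ) * k := by
    intro f hf
    rw [MeasureTheory.L2.inner_def (𝕜 := ℂ) (hf.toLp f) K]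
    have : ∫ a, (inner ℂ ((hf.toLp f) a) (K a) : ℂ) ∂μ
        = ∫ a, (starRingEnd ℂ) (f a) * k ∂μ := by
      refine integral_congr_ae ?_
      filter_upwards [hf.coeFn_toLp, (memLp_const (μ := μ) k).coeFn_toLp] with x e1 e2
      rw [e1, e2]
      simp [RCLike.inner_apply, mul_comm]
    rw [this, integral_mul_const, @integral_conj Ω m0 μ ℂ _ f]
  have hk_re : ∀ z : ℂ, RCLike.re ((starRingEnd ℂ) (-z) * z) = -(‖z‖ ^ 2) := by
    intro z
    rw [map_neg, neg_mul, ← Complex.normSq_eq_conj_mul_self]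
    simp [Complex.normSq_eq_norm_sq, ← Complex.ofReal_pow]
  have hΨK : RCLike.re (inner ℂ Ψ K : ℂ) = -(‖k‖ ^ 2) := by
    rw [hΨdef, hinner_K ψ hψmem, hIψ]
    exact hk_re k
  have hGK : RCLike.re (inner ℂ G K : ℂ) = -(‖k‖ ^ 2) := by
    rw [hGdef, hinner_K (μ[ψ|ma]) hψce_mem, integral_condExp hma, hIψ]
    exact hk_re k
  have hKnorm : ‖K‖ = ‖k‖ := by
    rw [hKdef, Lp.norm_toLp, eLpNorm_const k two_ne_zero (NeZero.ne μ)]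
    simp [measure_univ]
  have hnF : ‖F‖ ^ 2 = ‖G‖ ^ 2 - ‖k‖ ^ 2 := by
    rw [hFeq, norm_add_sq (𝕜 := ℂ), hGK, hKnorm]
    ring
  have hnΦ : ‖Φ‖ ^ 2 = ‖Ψ‖ ^ 2 - ‖k‖ ^ 2 := by
    rw [hΦeq, norm_add_sq (𝕜 := ℂ), hΨK, hKnorm]
    ring
  have hG2 : ‖G‖ ^ 2 ≤ c ^ 2 * ‖Ψ‖ ^ 2 := by
    nlinarith [norm_nonneg G, norm_nonneg Ψ, hc0.le]
  have hsq : ‖F‖ ^ 2 ≤ (c * ‖Φ‖) ^ 2 := by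
    have h5 : (c * ‖Φ‖) ^ 2 = c ^ 2 * ‖Ψ‖ ^ 2 - c ^ 2 * ‖k‖ ^ 2 := by
      rw [mul_pow, hnΦ]; ring
    have hc2 : c ^ 2 ≤ 1 := by nlinarith
    have h6 : c ^ 2 * ‖k‖ ^ 2 ≤ ‖k‖ ^ 2 := by
      calc c ^ 2 * ‖k‖ ^ 2 ≤ 1 * ‖k‖ ^ 2 :=
            mul_le_mul_of_nonneg_right hc2 (sq_nonneg _)
        _ = ‖k‖ ^ 2 := one_mul _
    rw [hnF, h5]
    linarith
  have hF_le : ‖F‖ ≤ c * ‖Φ‖ := by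
    have h4 : (0 : ℝ) ≤ c * ‖Φ‖ := mul_nonneg hc0.le (norm_nonneg Φ)
    calc ‖F‖ = Real.sqrt (‖F‖ ^ 2) := (Real.sqrt_sq (norm_nonneg F)).symm
      _ ≤ Real.sqrt ((c * ‖Φ‖) ^ 2) := Real.sqrt_le_sqrt hsq
      _ = c * ‖Φ‖ := Real.sqrt_sq h4
  have e1 : eLpNorm (μ[φ|ma]) 2 μ = ENNReal.ofReal ‖F‖ := by
    rw [hFdef, Lp.norm_toLp, ENNReal.ofReal_toReal hφce_mem.2.ne]
  have e2 : eLpNorm φ 2 μ = ENNReal.ofReal ‖Φ‖ := by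
    rw [hΦdef, Lp.norm_toLp, ENNReal.ofReal_toReal hφ.2.ne]
  rw [e1, e2, ← ENNReal.ofReal_mul hc0.le]
  exact ENNReal.ofReal_le_ofReal hF_le
end

section
/- Let (Ω,Σ,μ) be a probability space, Σ_a and Σ_b atomic σ-subalgebras of Σ with conditional expectations E_a, E_b, B_0 an atom of Σ_b, 2 < p < ∞, and 0 < c < 1. Assume ‖E_aE_bg‖_{L_2(μ)} ≤ c‖g‖_{L_2(μ)} for every g ∈ L_2(μ) with ∫_Ω g dμ = 0, and μ(B_0) > max{ (2·4^{−p}/(1−2·4^{−p}))^{1/(p−1)} , (1−4^{−p})^{1/p} }. Then there exists 0 < c_p < 1, depending only on c and p, such that ‖E_aE_bf‖_{L_p(μ)} ≤ c_p‖f‖_{L_p(μ)} for every f ∈ L_p(μ) with ∫_Ω f dμ = 0. -/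
open MeasureTheory ENNReal

theorem Real.ennnorm_eq_ofReal {r : ℝ} (hr : 0 ≤ r) : (‖r‖₊ : ℝ≥0∞) = ENNReal.ofReal r :=
  Real.enorm_eq_ofReal hr

theorem ofReal_norm_eq_coe_nnnorm {E : Type*} [SeminormedAddGroup E] (x : E) :
    ENNReal.ofReal ‖x‖ = (‖x‖₊ : ℝ≥0∞) :=
  ofReal_norm x

theorem ennnorm_integral_le_lintegral_ennnorm {α G : Type*} [MeasurableSpace α] {μ : Measure α}
    [NormedAddCommGroup G] [NormedSpace ℝ G] (f : α → G) :
    (‖∫ a, f a ∂μ‖₊ : ℝ≥0∞) ≤ ∫⁻ a, (‖f a‖₊ : ℝ≥0∞) ∂μ :=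
  enorm_integral_le_lintegral_enorm f

theorem eLpNorm_eq_lintegral_rpow_nnnorm {α E : Type*} [MeasurableSpace α] {μ : Measure α}
    [NormedAddCommGroup E] {p : ℝ≥0∞} (h0 : p ≠ 0) (htop : p ≠ ∞) {f : α → E} :
    eLpNorm f p μ = (∫⁻ x, (‖f x‖₊ : ℝ≥0∞) ^ p.toReal ∂μ) ^ (1 / p.toReal) :=
  eLpNorm_eq_lintegral_rpow_enorm_toReal h0 htop

theorem MeasureTheory.AEStronglyMeasurable.ennnorm {α E : Type*} [MeasurableSpace α] {μ : Measure α}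
    [NormedAddCommGroup E] {f : α → E} (h : AEStronglyMeasurable f μ) :
    AEMeasurable (fun x => (‖f x‖₊ : ℝ≥0∞)) μ :=
  h.enorm

-- ===== Auxiliary development =====

section AuxHolder
open MeasureTheory ENNReal

section Aux
variable {Ω : Type*} {m : MeasurableSpace Ω} {μ : Measure Ω}

/-- Hölder: L¹ bounded by L^r on a set of finite measure. -/
theorem setLIntegral_le_rpow_mul (s : Set Ω) (φ : Ω → ℝ≥0∞) (hφ : AEMeasurable φ (μ.restrict s))
    {r : ℝ} (hr : 1 < r) :
    ∫⁻ x in s, φ x ∂μ ≤ (∫⁻ x in s, φ x ^ r ∂μ) ^ (1/r) * (μ s) ^ (1 - 1/r) := by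
  have hconj : r.HolderConjugate (Real.conjExponent r) := Real.HolderConjugate.conjExponent hr
  have h := ENNReal.lintegral_mul_le_Lp_mul_Lq (μ.restrict s) hconj hφ
      (aemeasurable_const : AEMeasurable (fun _ => (1:ℝ≥0∞)) (μ.restrict s))
  simp only [Pi.mul_apply, mul_one, ENNReal.one_rpow, lintegral_const,
    Measure.restrict_apply MeasurableSet.univ, Set.univ_inter, one_mul] at h
  calc ∫⁻ x in s, φ x ∂μ ≤ (∫⁻ x in s, φ x ^ r ∂μ) ^ (1/r) *
        (μ s) ^ (1 / Real.conjExponent r) := h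
    _ = (∫⁻ x in s, φ x ^ r ∂μ) ^ (1/r) * (μ s) ^ (1 - 1/r) := by
        rw [show 1 / Real.conjExponent r = 1 - 1/r by
          rw [Real.conjExponent]; field_simp]

end Aux


end AuxHolder

namespace AtomicPartition

open MeasureTheory ENNReal

variable {Ω : Type*} {m : MeasurableSpace Ω} {μ : Measure Ω}
variable {E : Type*} [NormedAddCommGroup E] [NormedSpace ℝ E]

variable {E : Type*} [NormedAddCommGroup E] [NormedSpace ℝ E]

theorem condExp_apply (P : AtomicPartition μ) (f : Ω → E) {i : P.ι} {x : Ω}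
    (hx : x ∈ P.atom i) :
    P.condExp f x = (μ (P.atom i)).toReal⁻¹ • ∫ y in P.atom i, f y ∂μ := by
  have h0 : ∀ j, j ≠ i → Set.indicator (P.atom j)
      (fun _ => (μ (P.atom j)).toReal⁻¹ • ∫ y in P.atom j, f y ∂μ) x = 0 := by
    intro j hj
    have : x ∉ P.atom j := fun hxj => (P.disjoint hj).ne_of_mem hxj hx rfl
    exact Set.indicator_of_notMem this _
  rw [condExp, tsum_eq_single i h0, Set.indicator_of_mem hx]

noncomputable def idx (P : AtomicPartition μ) (x : Ω) : P.ι :=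
  (Set.mem_iUnion.mp (by rw [P.cover]; exact Set.mem_univ x : x ∈ ⋃ i, P.atom i)).choose

theorem mem_idx (P : AtomicPartition μ) (x : Ω) : x ∈ P.atom (P.idx x) :=
  (Set.mem_iUnion.mp (by rw [P.cover]; exact Set.mem_univ x : x ∈ ⋃ i, P.atom i)).choose_spec

theorem idx_eq_of_mem (P : AtomicPartition μ) {i : P.ι} {x : Ω} (hx : x ∈ P.atom i) :
    P.idx x = i := by
  by_contra h
  exact (P.disjoint h).ne_of_mem (P.mem_idx x) hx rfl

theorem condExp_eq (P : AtomicPartition μ) (f : Ω → E) :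
    P.condExp f = fun x =>
      (μ (P.atom (P.idx x))).toReal⁻¹ • ∫ y in P.atom (P.idx x), f y ∂μ :=
  funext fun x => P.condExp_apply f (P.mem_idx x)

theorem measurable_idx (P : AtomicPartition μ) :
    @Measurable Ω P.ι _ ⊤ P.idx := by
  intro s _
  have : P.idx ⁻¹' s = ⋃ i ∈ s, P.atom i := by
    ext x
    simp only [Set.mem_preimage, Set.mem_iUnion]
    constructor
    · intro h; exact ⟨P.idx x, h, P.mem_idx x⟩
    · rintro ⟨i, his, hxi⟩; rwa [P.idx_eq_of_mem hxi]
  rw [this]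
  haveI := P.countable
  exact MeasurableSet.biUnion (Set.to_countable s) (fun i _ => P.measurableSet i)

theorem stronglyMeasurable_comp_idx (P : AtomicPartition μ) {X : Type*}
    [MeasurableSpace X] [TopologicalSpace X] [TopologicalSpace.PseudoMetrizableSpace X] [BorelSpace X]
    [SecondCountableTopology X] (V : P.ι → X) :
    StronglyMeasurable (fun x => V (P.idx x)) := by
  have : Measurable (fun x => V (P.idx x)) :=
    (@measurable_from_top P.ι X _ V).comp P.measurable_idx
  exact this.stronglyMeasurable

theorem stronglyMeasurable_condExp_complex (P : AtomicPartition μ) (f : Ω → ℂ) :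
    StronglyMeasurable (P.condExp f) := by
  rw [P.condExp_eq f]
  exact P.stronglyMeasurable_comp_idx (X := ℂ)
    (fun i => (μ (P.atom i)).toReal⁻¹ • ∫ y in P.atom i, f y ∂μ)

theorem stronglyMeasurable_condExp_real (P : AtomicPartition μ) (f : Ω → ℝ) :
    StronglyMeasurable (P.condExp f) := by
  rw [P.condExp_eq f]
  exact P.stronglyMeasurable_comp_idx (X := ℝ)
    (fun i => (μ (P.atom i)).toReal⁻¹ • ∫ y in P.atom i, f y ∂μ)

theorem lintegral_partition (P : AtomicPartition μ) (φ : Ω → ℝ≥0∞) :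
    ∫⁻ x, φ x ∂μ = ∑' i, ∫⁻ x in P.atom i, φ x ∂μ := by
  haveI := P.countable
  rw [← setLIntegral_univ (μ := μ), ← P.cover,
    lintegral_iUnion P.measurableSet P.disjoint]



variable {Ω : Type*} {m : MeasurableSpace Ω} {μ : Measure Ω}
variable {E : Type*} [NormedAddCommGroup E] [NormedSpace ℝ E]

theorem measure_atom_ne_zero (P : AtomicPartition μ) (i : P.ι) : μ (P.atom i) ≠ 0 :=
  (P.pos i).ne'

theorem measure_atom_ne_top (P : AtomicPartition μ) (i : P.ι) : μ (P.atom i) ≠ ∞ :=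
  (P.lt_top i).ne

theorem toReal_measure_atom_pos (P : AtomicPartition μ) (i : P.ι) :
    0 < (μ (P.atom i)).toReal :=
  ENNReal.toReal_pos (P.measure_atom_ne_zero i) (P.measure_atom_ne_top i)

theorem enorm_condExp_le (P : AtomicPartition μ) (f : Ω → E) (x : Ω) :
    (‖P.condExp f x‖₊ : ℝ≥0∞) ≤
      (μ (P.atom (P.idx x)))⁻¹ * ∫⁻ y in P.atom (P.idx x), (‖f y‖₊ : ℝ≥0∞) ∂μ := by
  set i := P.idx x
  rw [P.condExp_apply f (P.mem_idx x)]
  have h1 : (‖(μ (P.atom i)).toReal⁻¹ • ∫ y in P.atom i, f y ∂μ‖₊ : ℝ≥0∞)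
      = (‖(μ (P.atom i)).toReal⁻¹‖₊ : ℝ≥0∞) * (‖∫ y in P.atom i, f y ∂μ‖₊ : ℝ≥0∞) := by
    rw [nnnorm_smul]; push_cast; ring
  rw [h1]
  have h2 : (‖(μ (P.atom i)).toReal⁻¹‖₊ : ℝ≥0∞) = (μ (P.atom i))⁻¹ := by
    rw [Real.ennnorm_eq_ofReal (le_of_lt (inv_pos.2 (P.toReal_measure_atom_pos i))),
      ENNReal.ofReal_inv_of_pos (P.toReal_measure_atom_pos i),
      ENNReal.ofReal_toReal (P.measure_atom_ne_top i)]
  rw [h2]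
  exact mul_le_mul_right (ennnorm_integral_le_lintegral_ennnorm _) _

theorem enorm_condExp_le_rpow (P : AtomicPartition μ) (f : Ω → E)
    (hf : AEMeasurable (fun y => (‖f y‖₊ : ℝ≥0∞)) μ) {r : ℝ} (hr : 1 < r) (x : Ω) :
    (‖P.condExp f x‖₊ : ℝ≥0∞) ≤
      ((μ (P.atom (P.idx x)))⁻¹ * ∫⁻ y in P.atom (P.idx x), (‖f y‖₊ : ℝ≥0∞) ^ r ∂μ) ^ (1/r) := by
  set i := P.idx x
  set a := μ (P.atom i) with ha
  have ha0 : a ≠ 0 := P.measure_atom_ne_zero i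
  have hat : a ≠ ∞ := P.measure_atom_ne_top i
  have hI := setLIntegral_le_rpow_mul (μ := μ) (P.atom i) (fun y => (‖f y‖₊ : ℝ≥0∞))
    hf.restrict hr
  calc (‖P.condExp f x‖₊ : ℝ≥0∞)
      ≤ a⁻¹ * ∫⁻ y in P.atom i, (‖f y‖₊ : ℝ≥0∞) ∂μ := P.enorm_condExp_le f x
    _ ≤ a⁻¹ * ((∫⁻ y in P.atom i, (‖f y‖₊ : ℝ≥0∞) ^ r ∂μ) ^ (1/r) * a ^ (1 - 1/r)) :=
        mul_le_mul_right hI _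
    _ = (a⁻¹ * ∫⁻ y in P.atom i, (‖f y‖₊ : ℝ≥0∞) ^ r ∂μ) ^ (1/r) := by
        set I := ∫⁻ y in P.atom i, (‖f y‖₊ : ℝ≥0∞) ^ r ∂μ
        have h1 : a⁻¹ = a ^ (-1:ℝ) := (ENNReal.rpow_neg_one a).symm
        have h3 : a ^ (-1:ℝ) * a ^ (1 - 1/r) = a ^ ((-1) * (1/r)) := by
          rw [← ENNReal.rpow_add _ _ ha0 hat]; congr 1; ring
        rw [ENNReal.mul_rpow_of_nonneg _ _ (by positivity : (0:ℝ) ≤ 1/r)]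
        calc a⁻¹ * (I ^ (1/r) * a ^ (1-1/r))
            = (a ^ (-1:ℝ) * a ^ (1-1/r)) * I ^ (1/r) := by rw [← h1]; ring
          _ = a ^ ((-1) * (1/r)) * I ^ (1/r) := by rw [h3]
          _ = (a ^ (-1:ℝ)) ^ (1/r) * I ^ (1/r) := by rw [← ENNReal.rpow_mul]
          _ = a⁻¹ ^ (1/r) * I ^ (1/r) := by rw [← h1]

theorem lintegral_comp_idx (P : AtomicPartition μ) (V : P.ι → ℝ≥0∞) :
    ∫⁻ x, V (P.idx x) ∂μ = ∑' i, V i * μ (P.atom i) := by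
  rw [P.lintegral_partition]
  refine tsum_congr fun i => ?_
  rw [setLIntegral_congr_fun (P.measurableSet i)
    (fun x hx => by rw [P.idx_eq_of_mem hx]), setLIntegral_const]

theorem lintegral_avg (P : AtomicPartition μ) (φ : Ω → ℝ≥0∞) :
    ∫⁻ x, ((μ (P.atom (P.idx x)))⁻¹ * ∫⁻ y in P.atom (P.idx x), φ y ∂μ) ∂μ
      = ∫⁻ x, φ x ∂μ := by
  rw [P.lintegral_comp_idx (fun i => (μ (P.atom i))⁻¹ * ∫⁻ y in P.atom i, φ y ∂μ),
    P.lintegral_partition φ]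
  refine tsum_congr fun i => ?_
  rw [mul_comm, ← mul_assoc, ENNReal.mul_inv_cancel (P.measure_atom_ne_zero i)
    (P.measure_atom_ne_top i), one_mul]

theorem lintegral_rpow_condExp_le (P : AtomicPartition μ) (f : Ω → E)
    (hf : AEMeasurable (fun y => (‖f y‖₊ : ℝ≥0∞)) μ) {r : ℝ} (hr : 1 < r) :
    ∫⁻ x, (‖P.condExp f x‖₊ : ℝ≥0∞) ^ r ∂μ ≤ ∫⁻ x, (‖f x‖₊ : ℝ≥0∞) ^ r ∂μ := by
  have hr0 : (0:ℝ) < r := lt_trans one_pos hr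
  calc ∫⁻ x, (‖P.condExp f x‖₊ : ℝ≥0∞) ^ r ∂μ
      ≤ ∫⁻ x, ((μ (P.atom (P.idx x)))⁻¹ *
          ∫⁻ y in P.atom (P.idx x), (‖f y‖₊ : ℝ≥0∞) ^ r ∂μ) ∂μ := by
        refine lintegral_mono fun x => ?_
        have h := P.enorm_condExp_le_rpow f hf hr x
        calc (‖P.condExp f x‖₊ : ℝ≥0∞) ^ r
            ≤ (((μ (P.atom (P.idx x)))⁻¹ *
              ∫⁻ y in P.atom (P.idx x), (‖f y‖₊ : ℝ≥0∞) ^ r ∂μ) ^ (1/r)) ^ r :=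
              ENNReal.rpow_le_rpow h (le_of_lt hr0)
          _ = _ := by
              rw [← ENNReal.rpow_mul, one_div, inv_mul_cancel₀ (ne_of_gt hr0),
                ENNReal.rpow_one]
    _ = _ := P.lintegral_avg _

theorem integral_condExp_eq (P : AtomicPartition μ) (ψ : Ω → ℝ) (hψ : Integrable ψ μ)
    (hPψ : Integrable (P.condExp ψ) μ) :
    ∫ x, P.condExp ψ x ∂μ = ∫ x, ψ x ∂μ := by
  haveI := P.countable
  have h1 : ∫ x, P.condExp ψ x ∂μ = ∑' i, ∫ x in P.atom i, P.condExp ψ x ∂μ := by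
    rw [← setIntegral_univ, ← P.cover,
      integral_iUnion P.measurableSet P.disjoint (by rw [P.cover]; exact hPψ.integrableOn)]
  have h2 : ∫ x, ψ x ∂μ = ∑' i, ∫ x in P.atom i, ψ x ∂μ := by
    rw [← setIntegral_univ, ← P.cover,
      integral_iUnion P.measurableSet P.disjoint (by rw [P.cover]; exact hψ.integrableOn)]
  rw [h1, h2]
  refine tsum_congr fun i => ?_
  have hconst : Set.EqOn (P.condExp ψ)
      (fun _ => (μ (P.atom i)).toReal⁻¹ • ∫ y in P.atom i, ψ y ∂μ) (P.atom i) :=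
    fun x hx => P.condExp_apply ψ hx
  rw [setIntegral_congr_fun (P.measurableSet i) hconst, setIntegral_const, measureReal_def,
    smul_inv_smul₀ (ne_of_gt (P.toReal_measure_atom_pos i))]

theorem condExp_apply_of_constant [CompleteSpace E] (P : AtomicPartition μ) (ψ : Ω → E) {i : P.ι} {x : Ω}
    (hx : x ∈ P.atom i) (hconst : ∀ y ∈ P.atom i, ψ y = ψ x) :
    P.condExp ψ x = ψ x := by
  rw [P.condExp_apply ψ hx, setIntegral_congr_fun (P.measurableSet i)
    (fun y hy => hconst y hy : Set.EqOn ψ (fun _ => ψ x) (P.atom i)), setIntegral_const, measureReal_def,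
    inv_smul_smul₀ (ne_of_gt (P.toReal_measure_atom_pos i))]

theorem condExp_ofReal (P : AtomicPartition μ) (ψ : Ω → ℝ) (hψ : Integrable ψ μ) :
    P.condExp (fun x => (ψ x : ℂ)) = fun x => ((P.condExp ψ x : ℝ) : ℂ) := by
  funext x
  rw [P.condExp_apply (fun x => (ψ x : ℂ)) (P.mem_idx x), P.condExp_apply ψ (P.mem_idx x)]
  have hint : ∫ y in P.atom (P.idx x), (ψ y : ℂ) ∂μ
      = ((∫ y in P.atom (P.idx x), ψ y ∂μ : ℝ) : ℂ) := by
    have h := ContinuousLinearMap.integral_comp_comm Complex.ofRealCLM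
      (hψ.integrableOn (s := P.atom (P.idx x)))
    simpa using h
  rw [hint]
  simp only [Complex.real_smul, smul_eq_mul]
  push_cast
  ring

theorem condExp_sub_const (P : AtomicPartition μ) (ψ : Ω → ℝ) (hψ : Integrable ψ μ) (k : ℝ) :
    P.condExp (fun x => ψ x - k) = fun x => P.condExp ψ x - k := by
  funext x
  rw [P.condExp_apply (fun x => ψ x - k) (P.mem_idx x), P.condExp_apply ψ (P.mem_idx x)]
  rw [integral_sub hψ.integrableOn
    (integrableOn_const (P.lt_top _).ne)]
  rw [setIntegral_const, measureReal_def]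
  set a := (μ (P.atom (P.idx x))).toReal with ha
  have ha0 : a ≠ 0 := ne_of_gt (P.toReal_measure_atom_pos _)
  simp only [smul_eq_mul]
  field_simp


end AtomicPartition

section Helpers
open MeasureTheory ENNReal
variable {Ω : Type*} {m : MeasurableSpace Ω} {μ : Measure Ω}

theorem integral_sq_eq_lintegral (φ : Ω → ℝ) (hφ : AEStronglyMeasurable φ μ) :
    ∫ x, (φ x)^2 ∂μ = (∫⁻ x, (‖φ x‖₊ : ℝ≥0∞) ^ (2:ℝ) ∂μ).toReal := by
  have h1 : ∫ x, (φ x)^2 ∂μ = ∫ x, |φ x|^2 ∂μ := by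
    congr 1; funext x; rw [sq_abs]
  rw [h1, integral_eq_lintegral_of_nonneg_ae (ae_of_all _ fun x => by positivity)
    ((hφ.norm.aemeasurable.pow_const 2).aestronglyMeasurable.congr
      (ae_of_all _ fun x => by simp [Real.norm_eq_abs]))]
  congr 1
  refine lintegral_congr fun x => ?_
  rw [show |φ x|^2 = ‖φ x‖ ^ ((2:ℕ):ℝ) by rw [Real.rpow_natCast, Real.norm_eq_abs],
    ← ENNReal.ofReal_rpow_of_nonneg (norm_nonneg _) (by norm_num),
    ofReal_norm_eq_coe_nnnorm]
  norm_num

theorem eLpNorm_two_eq (φ : Ω → ℝ) :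
    eLpNorm φ 2 μ = (∫⁻ x, (‖φ x‖₊ : ℝ≥0∞) ^ (2:ℝ) ∂μ) ^ (1/2 : ℝ) := by
  rw [eLpNorm_eq_lintegral_rpow_nnnorm (by norm_num) (by norm_num)]
  norm_num

theorem eLpNorm_two_eq_complex (φ : Ω → ℂ) :
    eLpNorm φ 2 μ = (∫⁻ x, (‖φ x‖₊ : ℝ≥0∞) ^ (2:ℝ) ∂μ) ^ (1/2 : ℝ) := by
  rw [eLpNorm_eq_lintegral_rpow_nnnorm (by norm_num) (by norm_num)]
  norm_num

theorem integral_add_const_sq [IsProbabilityMeasure μ] (φ : Ω → ℝ) (hφ : MemLp φ 2 μ) (k : ℝ) :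
    ∫ x, (φ x + k)^2 ∂μ = ∫ x, (φ x)^2 ∂μ + 2*k*(∫ x, φ x ∂μ) + k^2 := by
  have hint : Integrable φ μ := hφ.integrable (by norm_num)
  have hsq : Integrable (fun x => (φ x)^2) μ := hφ.integrable_sq
  have h1 : ∀ x, (φ x + k)^2 = (φ x)^2 + ((2*k) * φ x + k^2) := fun x => by ring
  calc ∫ x, (φ x + k)^2 ∂μ = ∫ x, ((φ x)^2 + ((2*k) * φ x + k^2)) ∂μ := by
        congr 1; funext x; exact h1 x
    _ = (∫ x, (φ x)^2 ∂μ) + ∫ x, ((2*k) * φ x + k^2) ∂μ :=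
        integral_add hsq ((hint.const_mul (2*k)).add (integrable_const _))
    _ = (∫ x, (φ x)^2 ∂μ) + ((2*k) * ∫ x, φ x ∂μ + k^2) := by
        rw [integral_add (hint.const_mul (2*k)) (integrable_const _)]
        rw [show (fun a => 2*k*φ a) = fun a => (2*k) • φ a by funext a; simp [smul_eq_mul]]
        rw [integral_smul, integral_const]
        simp [measure_univ, smul_eq_mul]
    _ = _ := by ring

theorem sq_lintegral_le_of_eLpNorm_le {φ ψ : Ω → ℝ} {c : ℝ} (hc : 0 ≤ c)
    (h : eLpNorm φ 2 μ ≤ ENNReal.ofReal c * eLpNorm ψ 2 μ) :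
    ∫⁻ x, (‖φ x‖₊ : ℝ≥0∞) ^ (2:ℝ) ∂μ ≤
      ENNReal.ofReal (c^2) * ∫⁻ x, (‖ψ x‖₊ : ℝ≥0∞) ^ (2:ℝ) ∂μ := by
  rw [eLpNorm_two_eq, eLpNorm_two_eq] at h
  have h2 := ENNReal.rpow_le_rpow (z := (2:ℝ)) h (by norm_num)
  rw [← ENNReal.rpow_mul, ENNReal.mul_rpow_of_nonneg _ _ (by norm_num : (0:ℝ) ≤ 2),
    ← ENNReal.rpow_mul, show (1/2 * 2 : ℝ) = 1 by norm_num, ENNReal.rpow_one,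
    ENNReal.rpow_one] at h2
  rw [ENNReal.ofReal_pow hc, show ((ENNReal.ofReal c)^2 : ℝ≥0∞) = (ENNReal.ofReal c)^(2:ℝ) by
    rw [← ENNReal.rpow_natCast]; norm_num]
  exact h2

theorem lintegral_two_ne_top_of_memℒp {φ : Ω → ℝ} (hφ : MemLp φ 2 μ) :
    ∫⁻ x, (‖φ x‖₊ : ℝ≥0∞) ^ (2:ℝ) ∂μ ≠ ∞ := by
  have h := hφ.2
  rw [eLpNorm_two_eq] at h
  intro hcon
  rw [hcon, ENNReal.top_rpow_of_pos (by norm_num)] at h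
  exact lt_irrefl _ h

end Helpers



set_option maxHeartbeats 2000000 in
/-- the case `p > 2` on probability spaces.  If `E_a E_b` is a strict
`L₂`-contraction on mean-zero functions with constant `c < 1` and the distinguished atom
`B₀` satisfies `μ(B₀) > max{(2·4⁻ᵖ/(1-2·4⁻ᵖ))^{1/(p-1)}, (1-4⁻ᵖ)^{1/p}}`, then `E_a E_b`
is a strict `L_p`-contraction on mean-zero functions, with a constant depending only on
`c` and `p`. -/
theorem statement7 {Ω : Type*} [MeasurableSpace Ω] (μ : Measure Ω) [IsProbabilityMeasure μ]
    (Pa Pb : AtomicPartition μ) (j0 : Pb.ι) (p c : ℝ)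
    (hp : 2 < p) (hc0 : 0 < c) (hc1 : c < 1)
    (H2 : ∀ g : Ω → ℂ, MemLp g 2 μ → ∫ x, g x ∂μ = 0 →
      eLpNorm (Pa.condExp (Pb.condExp g)) 2 μ ≤ ENNReal.ofReal c * eLpNorm g 2 μ)
    (hB0 : ENNReal.ofReal (max
        ((2 * (4:ℝ) ^ (-p) / (1 - 2 * (4:ℝ) ^ (-p))) ^ (1 / (p - 1)))
        ((1 - (4:ℝ) ^ (-p)) ^ (1 / p))) < μ (Pb.atom j0)) :
    ∃ cp : ℝ, 0 < cp ∧ cp < 1 ∧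
      ∀ f : Ω → ℂ, MemLp f (ENNReal.ofReal p) μ → ∫ x, f x ∂μ = 0 →
        eLpNorm (Pa.condExp (Pb.condExp f)) (ENNReal.ofReal p) μ
          ≤ ENNReal.ofReal cp * eLpNorm f (ENNReal.ofReal p) μ := by
  have hp0 : (0:ℝ) < p := by linarith
  have hp1 : (1:ℝ) < p := by linarith
  have hp2 : (1:ℝ) < p/2 := by linarith
  have hc2 : c^2 < 1 := by nlinarith
  have hc2' : (0:ℝ) < c^2 := by positivity
  set K : ℝ := c^2 + (1 - c^2)/4 with hK
  have hK0 : 0 < K := by rw [hK]; nlinarith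
  have hK1 : K < 1 := by rw [hK]; nlinarith
  refine ⟨K ^ (1/p), Real.rpow_pos_of_pos hK0 _,
    Real.rpow_lt_one hK0.le hK1 (by positivity), ?_⟩
  -- numeric facts about the atom B0
  set B0 : Set Ω := Pb.atom j0 with hB0def
  have hB0meas : MeasurableSet B0 := Pb.measurableSet j0
  set m0 : ℝ≥0∞ := μ B0 with hm0def
  have hm0top : m0 ≠ ∞ := Pb.measure_atom_ne_top j0
  have hm00 : m0 ≠ 0 := Pb.measure_atom_ne_zero j0
  have hm0le1 : m0 ≤ 1 := by
    rw [hm0def, ← (measure_univ (μ := μ))]; exact measure_mono (Set.subset_univ _)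
  -- 4^{-p} < 1/16
  have hx4 : (4:ℝ) ^ (-p) < 1/16 := by
    have h1 : (4:ℝ) ^ (-p) < (4:ℝ) ^ (-2:ℝ) :=
      Real.rpow_lt_rpow_of_exponent_lt (by norm_num) (by linarith)
    have h2 : (4:ℝ) ^ (-2:ℝ) = 1/16 := by
      rw [Real.rpow_neg (by norm_num), show ((2:ℝ)) = ((2:ℕ):ℝ) by norm_num,
        Real.rpow_natCast]
      norm_num
    exact h2 ▸ h1
  have hx4pos : (0:ℝ) < (4:ℝ) ^ (-p) := Real.rpow_pos_of_pos (by norm_num) _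
  -- m0 > 15/16
  have hm0big : ENNReal.ofReal (15/16) ≤ m0 := by
    have h1 : ((15:ℝ)/16) ≤ (1 - (4:ℝ)^(-p)) ^ (1/p) := by
      have h2 : (1 - (4:ℝ)^(-p)) ^ ((1:ℝ)) ≤ (1 - (4:ℝ)^(-p)) ^ (1/p) := by
        refine Real.rpow_le_rpow_of_exponent_ge (by linarith) (by linarith) ?_
        rw [div_le_one hp0]; linarith
      rw [Real.rpow_one] at h2
      linarith
    calc ENNReal.ofReal (15/16) ≤ ENNReal.ofReal ((1 - (4:ℝ)^(-p)) ^ (1/p)) :=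
          ENNReal.ofReal_le_ofReal h1
      _ ≤ ENNReal.ofReal (max _ _) := ENNReal.ofReal_le_ofReal (le_max_right _ _)
      _ ≤ m0 := hB0.le
  -- δ := μ B0ᶜ
  set δ : ℝ≥0∞ := μ B0ᶜ with hδdef
  have hδeq : δ = 1 - m0 := by
    rw [hδdef, measure_compl hB0meas hm0top, measure_univ, hm0def]
  have hδ16 : δ ≤ ENNReal.ofReal (1/16) := by
    rw [hδeq]
    calc 1 - m0 ≤ 1 - ENNReal.ofReal (15/16) := tsub_le_tsub_left hm0big 1
      _ = ENNReal.ofReal 1 - ENNReal.ofReal (15/16) := by rw [ENNReal.ofReal_one]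
      _ = ENNReal.ofReal (1 - 15/16) := (ENNReal.ofReal_sub 1 (by norm_num)).symm
      _ = ENNReal.ofReal (1/16) := by norm_num
  have hδm0 : δ ≤ m0 :=
    le_trans hδ16 (le_trans (ENNReal.ofReal_le_ofReal (by norm_num)) hm0big)
  have hδtop : δ ≠ ∞ := ne_of_lt (lt_of_le_of_lt hδ16 ENNReal.ofReal_lt_top)
  have hδhalf : δ ^ (1/2:ℝ) ≤ ENNReal.ofReal (1/4) := by
    calc δ ^ (1/2:ℝ) ≤ (ENNReal.ofReal (1/16)) ^ (1/2:ℝ) :=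
          ENNReal.rpow_le_rpow hδ16 (by norm_num)
      _ = ENNReal.ofReal ((1/16:ℝ) ^ (1/2:ℝ)) :=
          ENNReal.ofReal_rpow_of_nonneg (by norm_num) (by norm_num)
      _ = ENNReal.ofReal (1/4) := by
          rw [show (1/16:ℝ) = (1/4:ℝ)^(2:ℕ) by norm_num, ← Real.rpow_natCast (1/4:ℝ) 2,
            ← Real.rpow_mul (by norm_num : (0:ℝ) ≤ 1/4)]
          norm_num
  intro f hf hf0
  have hp'0 : (ENNReal.ofReal p) ≠ 0 := by
    simp only [ne_eq, ENNReal.ofReal_eq_zero, not_le]; linarith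
  have hp'top : (ENNReal.ofReal p) ≠ ∞ := ENNReal.ofReal_ne_top
  have hptoReal : (ENNReal.ofReal p).toReal = p := ENNReal.toReal_ofReal hp0.le
  have hfint : Integrable f μ := hf.integrable (by
    rw [← ENNReal.ofReal_one]; exact ENNReal.ofReal_le_ofReal hp1.le)
  have hfm : AEMeasurable (fun y => (‖f y‖₊ : ℝ≥0∞)) μ := hf.1.ennnorm
  set N : ℝ≥0∞ := ∫⁻ x, (‖f x‖₊ : ℝ≥0∞) ^ p ∂μ with hNdef
  have heLpf : eLpNorm f (ENNReal.ofReal p) μ = N ^ (1/p) := by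
    rw [eLpNorm_eq_lintegral_rpow_nnnorm hp'0 hp'top, hptoReal]
  have hNtop : N ≠ ∞ := by
    intro hcon
    have h1 := hf.2
    rw [heLpf, hcon, ENNReal.top_rpow_of_pos (by positivity)] at h1
    exact (lt_irrefl _ h1).elim
  set Nr : ℝ := N.toReal with hNrdef
  have hNr0 : 0 ≤ Nr := ENNReal.toReal_nonneg
  -- u := E_b f
  set u : Ω → ℂ := Pb.condExp f with hu
  have hum : StronglyMeasurable u := Pb.stronglyMeasurable_condExp_complex f
  have huen : AEMeasurable (fun y => (‖u y‖₊ : ℝ≥0∞)) μ := hum.aestronglyMeasurable.ennnorm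
  set Nu : ℝ≥0∞ := ∫⁻ x, (‖u x‖₊ : ℝ≥0∞) ^ p ∂μ with hNudef
  have hNuN : Nu ≤ N := Pb.lintegral_rpow_condExp_le f hfm hp1
  have hNutop : Nu ≠ ∞ := ne_top_of_le_ne_top hNtop hNuN
  -- h := ‖u‖^{p/2}
  set h : Ω → ℝ := fun x => ‖u x‖ ^ (p/2) with hdef
  have hhnn : ∀ x, 0 ≤ h x := fun x => Real.rpow_nonneg (norm_nonneg _) _
  have hhm : StronglyMeasurable h :=
    (Real.continuous_rpow_const (by linarith : (0:ℝ) ≤ p/2)).comp_stronglyMeasurable hum.norm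
  have hhen : ∀ x, (‖h x‖₊ : ℝ≥0∞) = (‖u x‖₊ : ℝ≥0∞) ^ (p/2) := fun x => by
    rw [Real.ennnorm_eq_ofReal (hhnn x),
      ← ENNReal.ofReal_rpow_of_nonneg (norm_nonneg _) (by linarith : (0:ℝ) ≤ p/2),
      ofReal_norm_eq_coe_nnnorm]
  have hh2 : ∫⁻ x, (‖h x‖₊ : ℝ≥0∞) ^ (2:ℝ) ∂μ = Nu := by
    refine lintegral_congr fun x => ?_
    rw [hhen x, ← ENNReal.rpow_mul]
    congr 1; field_simp
  have hhen' : AEMeasurable (fun y => (‖h y‖₊ : ℝ≥0∞)) μ := hhm.aestronglyMeasurable.ennnorm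
  have hhmem : MemLp h 2 μ := by
    refine ⟨hhm.aestronglyMeasurable, ?_⟩
    rw [eLpNorm_two_eq, hh2]
    exact ENNReal.rpow_lt_top_of_nonneg (by norm_num) hNutop
  have hhint : Integrable h μ := hhmem.integrable (by norm_num)
  set mb : ℝ := ∫ x, h x ∂μ with hmbdef
  have hmbnn : 0 ≤ mb := integral_nonneg hhnn
  -- H := E_a h
  set H : Ω → ℝ := Pa.condExp h with hHdef
  have hHm : StronglyMeasurable H := Pa.stronglyMeasurable_condExp_real h
  have hH2 : ∫⁻ x, (‖H x‖₊ : ℝ≥0∞) ^ (2:ℝ) ∂μ ≤ Nu := by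
    rw [← hh2]; exact Pa.lintegral_rpow_condExp_le h hhen' (by norm_num)
  have hHmem : MemLp H 2 μ := by
    refine ⟨hHm.aestronglyMeasurable, ?_⟩
    rw [eLpNorm_two_eq]
    exact ENNReal.rpow_lt_top_of_nonneg (by norm_num) (ne_top_of_le_ne_top hNutop hH2)
  have hHint : Integrable H μ := hHmem.integrable (by norm_num)
  have hintH : ∫ x, H x ∂μ = mb := Pa.integral_condExp_eq h hhint hHint
  -- global L¹ bound on h
  have hhL1 : ∫⁻ y, (‖h y‖₊ : ℝ≥0∞) ∂μ ≤ Nu ^ (1/2:ℝ) := by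
    have hCS := setLIntegral_le_rpow_mul (μ := μ) Set.univ (fun y => (‖h y‖₊:ℝ≥0∞))
      hhen'.restrict (by norm_num : (1:ℝ) < 2)
    rw [Measure.restrict_univ] at hCS
    rw [measure_univ] at hCS
    rw [ENNReal.one_rpow, mul_one, hh2] at hCS
    exact hCS
  have hhL1top : ∫⁻ y, (‖h y‖₊ : ℝ≥0∞) ∂μ ≠ ∞ :=
    ne_top_of_le_ne_top (ENNReal.rpow_ne_top_of_nonneg (by norm_num) hNutop) hhL1
  -- pointwise key inequality
  have hkey : ∀ x, (‖Pa.condExp u x‖₊ : ℝ≥0∞) ^ p ≤ (‖H x‖₊ : ℝ≥0∞) ^ (2:ℝ) := by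
    intro x
    have ha0 : μ (Pa.atom (Pa.idx x)) ≠ 0 := Pa.measure_atom_ne_zero _
    have hatop : μ (Pa.atom (Pa.idx x)) ≠ ∞ := Pa.measure_atom_ne_top _
    have hHA : ∫⁻ y in Pa.atom (Pa.idx x), (‖h y‖₊ : ℝ≥0∞) ∂μ ≠ ∞ :=
      ne_top_of_le_ne_top hhL1top (lintegral_mono' Measure.restrict_le_self le_rfl)
    have hHxnn : 0 ≤ H x := by
      rw [hHdef, Pa.condExp_apply h (Pa.mem_idx x)]
      exact smul_nonneg (inv_nonneg.2 ENNReal.toReal_nonneg)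
        (setIntegral_nonneg (Pa.measurableSet _) (fun y _ => hhnn y))
    have hHx : (‖H x‖₊ : ℝ≥0∞)
        = (μ (Pa.atom (Pa.idx x)))⁻¹ * ∫⁻ y in Pa.atom (Pa.idx x), (‖h y‖₊ : ℝ≥0∞) ∂μ := by
      rw [Real.ennnorm_eq_ofReal hHxnn, hHdef, Pa.condExp_apply h (Pa.mem_idx x)]
      rw [smul_eq_mul, ENNReal.ofReal_mul (inv_nonneg.2 ENNReal.toReal_nonneg)]
      congr 1
      · rw [ENNReal.ofReal_inv_of_pos (Pa.toReal_measure_atom_pos _),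
          ENNReal.ofReal_toReal hatop]
      · have heq2 : ∫⁻ y in Pa.atom (Pa.idx x), ENNReal.ofReal (h y) ∂μ
            = ∫⁻ y in Pa.atom (Pa.idx x), (‖h y‖₊:ℝ≥0∞) ∂μ :=
          lintegral_congr fun y => (Real.ennnorm_eq_ofReal (hhnn y)).symm
        rw [integral_eq_lintegral_of_nonneg_ae (ae_of_all _ (fun y => hhnn y))
          hhm.aestronglyMeasurable.restrict, heq2, ENNReal.ofReal_toReal hHA]
    have havg := Pa.enorm_condExp_le_rpow u huen hp2 x
    have hexp := ENNReal.rpow_le_rpow havg hp0.le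
    rw [← ENNReal.rpow_mul] at hexp
    rw [show 1/(p/2) * p = (2:ℝ) by field_simp] at hexp
    have hint_eq : ∫⁻ y in Pa.atom (Pa.idx x), (‖u y‖₊:ℝ≥0∞) ^ (p/2) ∂μ
        = ∫⁻ y in Pa.atom (Pa.idx x), (‖h y‖₊:ℝ≥0∞) ∂μ :=
      lintegral_congr fun y => (hhen y).symm
    rw [hint_eq, ← hHx] at hexp
    exact hexp
  have hS2 : ∫⁻ x, (‖Pa.condExp u x‖₊ : ℝ≥0∞) ^ p ∂μ
      ≤ ∫⁻ x, (‖H x‖₊:ℝ≥0∞) ^ (2:ℝ) ∂μ := lintegral_mono hkey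
  -- the mean-zero part and H2
  set G : Ω → ℝ := fun x => H x - mb with hGdef
  have hGmem : MemLp G 2 μ := hHmem.sub (memLp_const mb)
  set mz : Ω → ℝ := fun x => h x - mb with hmzdef
  have hmzmem : MemLp mz 2 μ := hhmem.sub (memLp_const mb)
  have hmzint : Integrable mz μ := hhint.sub (integrable_const mb)
  have hmz0 : ∫ x, mz x ∂μ = 0 := by
    rw [hmzdef]
    rw [integral_sub hhint (integrable_const mb), integral_const]
    simp [measure_univ, hmbdef]
  set gC : Ω → ℂ := fun x => ((mz x : ℝ) : ℂ) with hgCdef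
  have hgCmem : MemLp gC 2 μ := by
    have hcm := Complex.ofRealCLM.comp_memLp' hmzmem
    exact hcm
  have hgC0 : ∫ x, gC x ∂μ = 0 := by
    have hcc := ContinuousLinearMap.integral_comp_comm Complex.ofRealCLM hmzint
    have : ∫ x, gC x ∂μ = ((∫ x, mz x ∂μ : ℝ) : ℂ) := by
      simpa [hgCdef, Function.comp] using hcc
    rw [this, hmz0]; norm_num
  have hHB := H2 gC hgCmem hgC0
  -- identify E_b gC = gC and E_a gC = complexification of G
  have hconstu : ∀ x : Ω, ∀ y ∈ Pb.atom (Pb.idx x), u y = u x := by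
    intro x y hy
    rw [hu, Pb.condExp_apply f hy, Pb.condExp_apply f (Pb.mem_idx x)]
  have hPbgC : Pb.condExp gC = gC := by
    funext x
    refine Pb.condExp_apply_of_constant gC (Pb.mem_idx x) (fun y hy => ?_)
    have huy : u y = u x := hconstu x y hy
    simp only [hgCdef, hmzdef, hdef, huy]
  have hPagC : Pa.condExp gC = fun x => ((G x : ℝ) : ℂ) := by
    have h1 : Pa.condExp gC = fun x => ((Pa.condExp mz x : ℝ) : ℂ) := by
      rw [hgCdef]; exact Pa.condExp_ofReal mz hmzint
    rw [h1]
    funext x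
    congr 1
    rw [hmzdef, Pa.condExp_sub_const h hhint mb]
  rw [hPbgC, hPagC] at hHB
  have hcomp : ∀ (φ : Ω → ℝ), eLpNorm (fun x => ((φ x : ℝ):ℂ)) 2 μ = eLpNorm φ 2 μ := by
    intro φ
    rw [eLpNorm_two_eq_complex, eLpNorm_two_eq]
    congr 1
    refine lintegral_congr fun x => ?_
    congr 1
    rw [← ofReal_norm_eq_coe_nnnorm, ← ofReal_norm_eq_coe_nnnorm, Complex.norm_real]
  rw [hcomp G] at hHB
  rw [hgCdef, hcomp mz] at hHB
  have hL2 : ∫⁻ x, (‖G x‖₊:ℝ≥0∞)^(2:ℝ) ∂μ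
      ≤ ENNReal.ofReal (c^2) * ∫⁻ x, (‖mz x‖₊:ℝ≥0∞)^(2:ℝ) ∂μ :=
    sq_lintegral_le_of_eLpNorm_le hc0.le hHB
  have hIG := lintegral_two_ne_top_of_memℒp hGmem
  have hImz := lintegral_two_ne_top_of_memℒp hmzmem
  have hIH := lintegral_two_ne_top_of_memℒp hHmem
  have hL2r : ∫ x, (G x)^2 ∂μ ≤ c^2 * ∫ x, (mz x)^2 ∂μ := by
    rw [integral_sq_eq_lintegral G hGmem.1, integral_sq_eq_lintegral mz hmzmem.1]
    have ht := ENNReal.toReal_mono (by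
      exact ENNReal.mul_ne_top ENNReal.ofReal_ne_top hImz) hL2
    rw [ENNReal.toReal_mul, ENNReal.toReal_ofReal (by positivity)] at ht
    exact ht
  -- Pythagoras
  have hG0 : ∫ x, G x ∂μ = 0 := by
    rw [hGdef, integral_sub hHint (integrable_const mb), integral_const, hintH]
    simp [measure_univ]
  have hPyH : ∫ x, (H x)^2 ∂μ = ∫ x, (G x)^2 ∂μ + mb^2 := by
    have hiq := integral_add_const_sq G hGmem mb
    have hGH : (fun x => (G x + mb)^2) = fun x => (H x)^2 := by
      funext x; rw [hGdef]; ring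
    rw [hGH] at hiq
    rw [hiq, hG0]; ring
  have hPymz : ∫ x, (mz x)^2 ∂μ = ∫ x, (h x)^2 ∂μ - mb^2 := by
    have hiq := integral_add_const_sq h hhmem (-mb)
    have hGH : (fun x => (h x + -mb)^2) = fun x => (mz x)^2 := by
      funext x; rw [hmzdef]; ring
    rw [hGH] at hiq
    rw [hiq, ← hmbdef]; ring
  have hrh_le : ∫ x, (h x)^2 ∂μ ≤ Nr := by
    rw [integral_sq_eq_lintegral h hhmem.1, hh2]
    exact ENNReal.toReal_mono hNtop hNuN
  have hmz_sq_nn : 0 ≤ ∫ x, (mz x)^2 ∂μ := integral_nonneg fun x => sq_nonneg _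
  -- bound on the mean mb
  have hmbound : mb ≤ 1/2 * Nr ^ (1/2:ℝ) := by
    have hδ' : δ = μ ((Pb.atom j0)ᶜ) := by rw [hδdef, hB0def]
    have hm0' : m0 = μ (Pb.atom j0) := by rw [hm0def, hB0def]
    have hBmeas : MeasurableSet (Pb.atom j0) := Pb.measurableSet j0
    have hsplit : mb = (∫ x in Pb.atom j0, h x ∂μ) + ∫ x in (Pb.atom j0)ᶜ, h x ∂μ :=
      (integral_add_compl hBmeas hhint).symm
    have hT2nn : 0 ≤ ∫ x in (Pb.atom j0)ᶜ, h x ∂μ :=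
      setIntegral_nonneg hBmeas.compl (fun y _ => hhnn y)
    have hT1nn : 0 ≤ ∫ x in Pb.atom j0, h x ∂μ :=
      setIntegral_nonneg hBmeas (fun y _ => hhnn y)
    -- T2 bound
    have hT2 : ENNReal.ofReal (∫ x in (Pb.atom j0)ᶜ, h x ∂μ) ≤ δ^(1/2:ℝ) * N^(1/2:ℝ) := by
      have hfinB : ∫⁻ x in (Pb.atom j0)ᶜ, (‖h x‖₊:ℝ≥0∞) ∂μ ≠ ∞ :=
        ne_top_of_le_ne_top hhL1top (lintegral_mono' Measure.restrict_le_self le_rfl)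
      have heq : ENNReal.ofReal (∫ x in (Pb.atom j0)ᶜ, h x ∂μ)
          = ∫⁻ x in (Pb.atom j0)ᶜ, (‖h x‖₊:ℝ≥0∞) ∂μ := by
        rw [integral_eq_lintegral_of_nonneg_ae (ae_of_all _ fun y => hhnn y)
          hhm.aestronglyMeasurable.restrict]
        rw [show (∫⁻ x in (Pb.atom j0)ᶜ, ENNReal.ofReal (h x) ∂μ)
            = ∫⁻ x in (Pb.atom j0)ᶜ, (‖h x‖₊:ℝ≥0∞) ∂μ from
          lintegral_congr fun y => (Real.ennnorm_eq_ofReal (hhnn y)).symm]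
        exact ENNReal.ofReal_toReal hfinB
      rw [heq]
      have hCS := setLIntegral_le_rpow_mul (μ := μ) ((Pb.atom j0)ᶜ)
        (fun y => (‖h y‖₊:ℝ≥0∞)) hhen'.restrict (by norm_num : (1:ℝ) < 2)
      refine le_trans hCS ?_
      have hmono : ∫⁻ x in (Pb.atom j0)ᶜ, (‖h x‖₊:ℝ≥0∞)^(2:ℝ) ∂μ ≤ N :=
        le_trans (le_trans (lintegral_mono' Measure.restrict_le_self le_rfl)
          (le_of_eq hh2)) hNuN
      calc (∫⁻ x in (Pb.atom j0)ᶜ, (‖h x‖₊:ℝ≥0∞)^(2:ℝ) ∂μ)^(1/2:ℝ) * (μ ((Pb.atom j0)ᶜ))^(1-1/2:ℝ)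
          ≤ N^(1/2:ℝ) * (μ ((Pb.atom j0)ᶜ))^(1-1/2:ℝ) :=
            mul_le_mul_left (ENNReal.rpow_le_rpow hmono (by norm_num)) _
        _ = δ^(1/2:ℝ) * N^(1/2:ℝ) := by
            rw [← hδ', show (1-1/2:ℝ) = (1/2:ℝ) by norm_num, mul_comm]
    -- T1 bound
    have hT1 : ENNReal.ofReal (∫ x in Pb.atom j0, h x ∂μ) ≤ δ^(1/2:ℝ) * N^(1/2:ℝ) := by
      obtain ⟨x0, hx0⟩ : (Pb.atom j0).Nonempty :=
        nonempty_of_measure_ne_zero (Pb.measure_atom_ne_zero j0)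
      have huconst : ∀ x ∈ Pb.atom j0, u x = u x0 := fun x hx => by
        rw [hu, Pb.condExp_apply f hx, Pb.condExp_apply f hx0]
      have hcongr : Set.EqOn h (fun _ => h x0) (Pb.atom j0) := fun x hx => by
        simp only [hdef]; rw [huconst x hx]
      rw [setIntegral_congr_fun hBmeas hcongr, setIntegral_const, measureReal_def, smul_eq_mul]
      rw [ENNReal.ofReal_mul ENNReal.toReal_nonneg]
      have hofm0 : ENNReal.ofReal ((μ (Pb.atom j0)).toReal) = m0 := by
        rw [← hm0']; exact ENNReal.ofReal_toReal hm0top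
      rw [hofm0]
      -- now bound ofReal (h x0)
      have hhx0 : ENNReal.ofReal (h x0) = (‖u x0‖₊ : ℝ≥0∞) ^ (p/2) := by
        rw [← Real.ennnorm_eq_ofReal (hhnn x0), hhen x0]
      -- ‖u x0‖ₑ ≤ m0⁻¹ * (N^{1/p} δ^{(p-1)/p})
      have hux0 : u x0 = (μ (Pb.atom j0)).toReal⁻¹ • ∫ y in Pb.atom j0, f y ∂μ := by
        rw [hu]; exact Pb.condExp_apply f hx0
      have hnormint : (‖∫ y in Pb.atom j0, f y ∂μ‖₊ : ℝ≥0∞) ≤ N^(1/p:ℝ) * δ^(1-1/p:ℝ) := by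
        have hneg : (∫ y in Pb.atom j0, f y ∂μ) = - ∫ y in (Pb.atom j0)ᶜ, f y ∂μ := by
          have hac := integral_add_compl hBmeas hfint
          rw [hf0] at hac
          exact eq_neg_of_add_eq_zero_left hac
        rw [hneg, nnnorm_neg]
        refine le_trans (ennnorm_integral_le_lintegral_ennnorm _) ?_
        have hHold := setLIntegral_le_rpow_mul (μ := μ) ((Pb.atom j0)ᶜ)
          (fun y => (‖f y‖₊:ℝ≥0∞)) hfm.restrict hp1
        refine le_trans hHold ?_
        have hm1 : (∫⁻ x in (Pb.atom j0)ᶜ, (‖f x‖₊:ℝ≥0∞)^p ∂μ)^(1/p:ℝ) ≤ N^(1/p:ℝ) :=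
          ENNReal.rpow_le_rpow (lintegral_mono' Measure.restrict_le_self le_rfl)
            (by positivity)
        rw [← hδ']
        exact mul_le_mul_left hm1 _
      have huen0 : (‖u x0‖₊ : ℝ≥0∞) ≤ m0⁻¹ * (N^(1/p:ℝ) * δ^(1-1/p:ℝ)) := by
        rw [hux0]
        have hsm : (‖(μ (Pb.atom j0)).toReal⁻¹ • ∫ y in Pb.atom j0, f y ∂μ‖₊ : ℝ≥0∞)
            = m0⁻¹ * (‖∫ y in Pb.atom j0, f y ∂μ‖₊ : ℝ≥0∞) := by
          rw [nnnorm_smul]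
          push_cast
          congr 1
          rw [Real.ennnorm_eq_ofReal (le_of_lt (inv_pos.2 (Pb.toReal_measure_atom_pos j0))),
            ENNReal.ofReal_inv_of_pos (Pb.toReal_measure_atom_pos j0),
            ENNReal.ofReal_toReal (Pb.measure_atom_ne_top j0), hm0']
        rw [hsm]
        exact mul_le_mul_right hnormint _
      -- raise to p/2 and conclude
      have hpow := ENNReal.rpow_le_rpow huen0 (by linarith : (0:ℝ) ≤ p/2)
      rw [hhx0]
      calc m0 * (‖u x0‖₊ : ℝ≥0∞) ^ (p/2)
          ≤ m0 * (m0⁻¹ * (N^(1/p:ℝ) * δ^(1-1/p:ℝ))) ^ (p/2) := mul_le_mul_right hpow _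
        _ = (δ * m0⁻¹)^((p-2)/2 : ℝ) * (δ^(1/2:ℝ) * N^(1/2:ℝ)) := by
            have hpne : p ≠ 0 := ne_of_gt hp0
            have e1 : (m0⁻¹ * (N^(1/p:ℝ) * δ^(1-1/p:ℝ)))^((p:ℝ)/2)
                = (m0⁻¹)^((p:ℝ)/2) * (N^(1/2:ℝ) * δ^((p-1)/2:ℝ)) := by
              rw [ENNReal.mul_rpow_of_nonneg _ _ (by linarith : (0:ℝ) ≤ p/2),
                ENNReal.mul_rpow_of_nonneg _ _ (by linarith : (0:ℝ) ≤ p/2),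
                ← ENNReal.rpow_mul N, ← ENNReal.rpow_mul δ,
                show (1/p) * (p/2) = (1/2:ℝ) by field_simp,
                show (1-1/p) * (p/2) = ((p-1)/2 : ℝ) by field_simp]
            have e2 : m0 * (m0⁻¹)^((p:ℝ)/2) = (m0⁻¹)^((p-2)/2:ℝ) := by
              rw [show ((p:ℝ)/2) = ((p-2)/2 + 1 : ℝ) by ring,
                ENNReal.rpow_add_of_nonneg ((p-2)/2) 1 (by linarith) (by norm_num),
                ENNReal.rpow_one]
              rw [← mul_assoc, mul_comm m0 _, mul_assoc,
                ENNReal.mul_inv_cancel hm00 hm0top, mul_one]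
            have e3 : δ^((p-1)/2:ℝ) = δ^((p-2)/2:ℝ) * δ^(1/2:ℝ) := by
              rw [← ENNReal.rpow_add_of_nonneg ((p-2)/2) (1/2) (by linarith) (by norm_num)]
              congr 1; ring
            have e4 : (δ * m0⁻¹)^((p-2)/2:ℝ) = δ^((p-2)/2:ℝ) * (m0⁻¹)^((p-2)/2:ℝ) :=
              ENNReal.mul_rpow_of_nonneg _ _ (by linarith : (0:ℝ) ≤ (p-2)/2)
            calc m0 * (m0⁻¹ * (N^(1/p:ℝ) * δ^(1-1/p:ℝ)))^((p:ℝ)/2)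
                = m0 * ((m0⁻¹)^((p:ℝ)/2) * (N^(1/2:ℝ) * (δ^((p-2)/2:ℝ) * δ^(1/2:ℝ)))) := by
                  rw [e1, ← e3]
              _ = (m0 * (m0⁻¹)^((p:ℝ)/2)) * δ^((p-2)/2:ℝ) * (δ^(1/2:ℝ) * N^(1/2:ℝ)) := by
                  ring
              _ = (m0⁻¹)^((p-2)/2:ℝ) * δ^((p-2)/2:ℝ) * (δ^(1/2:ℝ) * N^(1/2:ℝ)) := by
                  rw [e2]
              _ = (δ * m0⁻¹)^((p-2)/2 : ℝ) * (δ^(1/2:ℝ) * N^(1/2:ℝ)) := by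
                  rw [e4]; ring
        _ ≤ 1 * (δ^(1/2:ℝ) * N^(1/2:ℝ)) := by
            refine mul_le_mul_left ?_ _
            refine ENNReal.rpow_le_one ?_ (by linarith : (0:ℝ) ≤ (p-2)/2)
            calc δ * m0⁻¹ ≤ m0 * m0⁻¹ := mul_le_mul_left hδm0 _
              _ = 1 := ENNReal.mul_inv_cancel hm00 hm0top
        _ = δ^(1/2:ℝ) * N^(1/2:ℝ) := one_mul _
    -- combine
    have hmb_en : ENNReal.ofReal mb ≤ ENNReal.ofReal (1/2) * N^(1/2:ℝ) := by
      rw [hsplit, ENNReal.ofReal_add hT1nn hT2nn]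
      calc ENNReal.ofReal (∫ x in Pb.atom j0, h x ∂μ)
            + ENNReal.ofReal (∫ x in (Pb.atom j0)ᶜ, h x ∂μ)
          ≤ (δ^(1/2:ℝ) * N^(1/2:ℝ)) + (δ^(1/2:ℝ) * N^(1/2:ℝ)) := add_le_add hT1 hT2
        _ = (2:ℝ≥0∞) * δ^(1/2:ℝ) * N^(1/2:ℝ) := by ring
        _ ≤ (2:ℝ≥0∞) * ENNReal.ofReal (1/4) * N^(1/2:ℝ) := by
            exact mul_le_mul_left (mul_le_mul_right hδhalf _) _
        _ = ENNReal.ofReal (1/2) * N^(1/2:ℝ) := by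
            rw [show (2:ℝ≥0∞) = ENNReal.ofReal 2 by simp,
              ← ENNReal.ofReal_mul (by norm_num : (0:ℝ) ≤ 2)]
            norm_num
    have hfinR : ENNReal.ofReal (1/2) * N^(1/2:ℝ) ≠ ∞ :=
      ENNReal.mul_ne_top ENNReal.ofReal_ne_top
        (ENNReal.rpow_ne_top_of_nonneg (by norm_num) hNtop)
    have ht := ENNReal.toReal_mono hfinR hmb_en
    rw [ENNReal.toReal_ofReal hmbnn, ENNReal.toReal_mul,
      ENNReal.toReal_ofReal (by norm_num : (0:ℝ) ≤ 1/2), ← ENNReal.toReal_rpow] at ht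
    exact ht
  have hmbsq : mb^2 ≤ 1/4 * Nr := by
    have h1 : mb^2 ≤ (1/2 * Nr^(1/2:ℝ))^2 := pow_le_pow_left₀ hmbnn hmbound 2
    have h2 : (Nr^(1/2:ℝ))^2 = Nr := by
      rw [← Real.rpow_natCast (Nr^(1/2:ℝ)) 2, ← Real.rpow_mul hNr0]; norm_num
    nlinarith
  -- combine to the final real bound
  have hfinal_r : ∫ x, (H x)^2 ∂μ ≤ K * Nr := by
    have h1 : ∫ x, (G x)^2 ∂μ ≤ c^2 * (∫ x, (h x)^2 ∂μ - mb^2) := by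
      rw [← hPymz]; exact hL2r
    have hhh : mb^2 ≤ ∫ x, (h x)^2 ∂μ := by
      have := hPymz ▸ hmz_sq_nn; linarith
    have e1 : c^2 * (∫ x, (h x)^2 ∂μ) ≤ c^2 * Nr :=
      mul_le_mul_of_nonneg_left hrh_le hc2'.le
    have e2 : (1-c^2) * mb^2 ≤ (1-c^2) * (1/4*Nr) :=
      mul_le_mul_of_nonneg_left hmbsq (by linarith)
    rw [hPyH, hK]
    nlinarith
  -- final ENNReal chain
  have hHlin : ∫⁻ x, (‖H x‖₊:ℝ≥0∞)^(2:ℝ) ∂μ = ENNReal.ofReal (∫ x, (H x)^2 ∂μ) := by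
    rw [integral_sq_eq_lintegral H hHmem.1, ENNReal.ofReal_toReal hIH]
  have hwN : ∫⁻ x, (‖Pa.condExp u x‖₊:ℝ≥0∞)^p ∂μ ≤ ENNReal.ofReal (K * Nr) := by
    refine le_trans hS2 ?_
    rw [hHlin]
    exact ENNReal.ofReal_le_ofReal hfinal_r
  have heLpw : eLpNorm (Pa.condExp u) (ENNReal.ofReal p) μ
      = (∫⁻ x, (‖Pa.condExp u x‖₊:ℝ≥0∞)^p ∂μ) ^ (1/p) := by
    rw [eLpNorm_eq_lintegral_rpow_nnnorm hp'0 hp'top, hptoReal]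
  rw [heLpw, heLpf]
  calc (∫⁻ x, (‖Pa.condExp u x‖₊:ℝ≥0∞)^p ∂μ) ^ (1/p)
      ≤ (ENNReal.ofReal (K * Nr)) ^ (1/p) := ENNReal.rpow_le_rpow hwN (by positivity)
    _ = ENNReal.ofReal ((K*Nr) ^ (1/p)) :=
        ENNReal.ofReal_rpow_of_nonneg (by positivity) (by positivity)
    _ = ENNReal.ofReal (K^(1/p) * Nr^(1/p)) := by rw [Real.mul_rpow hK0.le hNr0]
    _ = ENNReal.ofReal (K^(1/p)) * ENNReal.ofReal (Nr^(1/p)) :=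
        ENNReal.ofReal_mul (by positivity)
    _ = ENNReal.ofReal (K^(1/p)) * N ^ (1/p) := by
        rw [← ENNReal.ofReal_rpow_of_nonneg hNr0 (by positivity),
          ENNReal.ofReal_toReal hNtop]
end
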